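/- arXiv:2209.08341 — 4 statements merged into one kernel-verified Lean document; each statement's English description precedes it below -/
import Mathlib

section
/- There exists a constant K>0, depending only on T, such that for all t∈[0,T] and all x,y∈[0,1], ∫_0^1 |G_t(x,z) − G_t(y,z)|² dz ≤ K·|x−y|. Equivalently (by Parseval's identity), ∑_{j=1}^∞ (sin²(jπt)/(j²π²))·|φ_j(x)−φ_j(y)|² ≤ K·|x−y|. -/
open MeasureTheory Real Filter
open scoped ENNReal

noncomputable section

/-- φ_j(x) = √2 sin(jπx) -/
def phi (j : ℕ) (x : ℝ) : ℝ := Real.sqrt 2 * Real.sin (j * Real.pi * x)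

/-- κ_n(z) = ⌊zn⌋/n -/
def kappan (n : ℕ) (z : ℝ) : ℝ := (⌊z * n⌋ : ℝ) / n

/-- Π_n, piecewise linear interpolation with nodes 0, 1/n, …, 1 -/
def Pin (n : ℕ) (w : ℝ → ℝ) (x : ℝ) : ℝ :=
  w (kappan n x) + ((n : ℝ) * x - (⌊x * n⌋ : ℝ)) * (w (kappan n x + 1 / n) - w (kappan n x))

/-- c^n_j = sin²(jπ/(2n)) / (jπ/(2n))² -/
def cn (n j : ℕ) : ℝ :=
  (Real.sin (j * Real.pi / (2 * n)))^2 / (j * Real.pi / (2 * n))^2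

/-- j-th term of the Green function series -/
def greenTerm (j : ℕ) (t x y : ℝ) : ℝ :=
  Real.sin (j * Real.pi * t) / (j * Real.pi) * phi j x * phi j y

/-- Green function G_t(x,y) = ∑_{j≥1} sin(jπt)/(jπ) φ_j(x) φ_j(y), as limit of partial sums -/
def greenG (t x y : ℝ) : ℝ :=
  limUnder atTop (fun N : ℕ => ∑ j ∈ Finset.Icc 1 N, greenTerm j t x y)

/-- discrete Green function G^n_t(x,y) -/
def greenGn (n : ℕ) (t x y : ℝ) : ℝ :=
  ∑ j ∈ Finset.Icc 1 (n - 1),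
    Real.sin (j * Real.pi * t * Real.sqrt (cn n j)) / (j * Real.pi * Real.sqrt (cn n j)) *
      Pin n (phi j) x * phi j (kappan n y)

/-- discrete Dirichlet Laplacian Δ_n -/
def discLap (n : ℕ) (w : ℝ → ℝ) (z : ℝ) : ℝ :=
  if z ∈ Set.Ico ((1:ℝ)/n) 1 then
    (n:ℝ)^2 * (w (kappan n z + 1/n) - 2 * w (kappan n z) + w (kappan n z - 1/n))
  else 0

/-- O_T = [0,T] × [0,1] -/
def OT (T : ℝ) : Set (ℝ × ℝ) := Set.Icc 0 T ×ˢ Set.Icc 0 1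

/-- f solves the skeleton equation of the stochastic wave equation with control h -/
def SolvesSkeleton (T : ℝ) (u₀ v₀ b σ : ℝ → ℝ) (h f : ℝ → ℝ → ℝ) : Prop :=
  ∀ t ∈ Set.Icc (0:ℝ) T, ∀ x ∈ Set.Icc (0:ℝ) 1,
    f t x = (∫ z in (0:ℝ)..1, greenG t x z * v₀ z)
      + deriv (fun s => ∫ z in (0:ℝ)..1, greenG s x z * u₀ z) t
      + (∫ s in (0:ℝ)..t, ∫ z in (0:ℝ)..1, greenG (t - s) x z * b (f s z))
      + ∫ s in (0:ℝ)..t, ∫ z in (0:ℝ)..1, greenG (t - s) x z * σ (f s z) * h s z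

/-- f solves the discrete (spatial finite difference, level n) skeleton equation with control h -/
def SolvesDiscSkeleton (T : ℝ) (n : ℕ) (u₀ v₀ b σ : ℝ → ℝ) (h f : ℝ → ℝ → ℝ) : Prop :=
  ∀ t ∈ Set.Icc (0:ℝ) T, ∀ x ∈ Set.Icc (0:ℝ) 1,
    f t x = (∫ z in (0:ℝ)..1, greenGn n t x z * v₀ (kappan n z))
      + (∫ z in (0:ℝ)..1, deriv (fun s => greenGn n s x z) t * u₀ (kappan n z))
      + (∫ s in (0:ℝ)..t, ∫ z in (0:ℝ)..1, greenGn n (t - s) x z * b (f s (kappan n z)))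
      + ∫ s in (0:ℝ)..t, ∫ z in (0:ℝ)..1, greenGn n (t - s) x z * σ (f s (kappan n z)) * h s z

/-- h is square integrable on O_T -/
def SqIntOn (T : ℝ) (h : ℝ → ℝ → ℝ) : Prop :=
  MeasureTheory.IntegrableOn (fun p : ℝ × ℝ => (h p.1 p.2)^2) (OT T)

/-- squared L²(O_T) norm -/
def L2sq (T : ℝ) (h : ℝ → ℝ → ℝ) : ℝ := ∫ p in OT T, (h p.1 p.2)^2

/-- one-point rate functional J_y for the continuous skeleton equation -/
def Jy (T x₀ y : ℝ) (u₀ v₀ b σ : ℝ → ℝ) (f : ℝ → ℝ → ℝ) : ℝ≥0∞ :=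
  if f T x₀ = y then
    sInf { c : ℝ≥0∞ | ∃ h : ℝ → ℝ → ℝ, SqIntOn T h ∧ SolvesSkeleton T u₀ v₀ b σ h f ∧
      c = ENNReal.ofReal (1/2 * L2sq T h) }
  else ⊤

/-- one-point rate functional J^n_y for the discrete skeleton equation of level n -/
def Jny (T x₀ y : ℝ) (u₀ v₀ b σ : ℝ → ℝ) (n : ℕ) (f : ℝ → ℝ → ℝ) : ℝ≥0∞ :=
  if f T x₀ = y then
    sInf { c : ℝ≥0∞ | ∃ h : ℝ → ℝ → ℝ, SqIntOn T h ∧ SolvesDiscSkeleton T n u₀ v₀ b σ h f ∧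
      c = ENNReal.ofReal (1/2 * L2sq T h) }
  else ⊤

/-- the control recovering f in the discrete skeleton equation (inverse of Υⁿ) -/
def controlOf (T : ℝ) (b σ : ℝ → ℝ) (n : ℕ) (f : ℝ → ℝ → ℝ) (t x : ℝ) : ℝ :=
  (derivWithin (derivWithin (fun s => f s (kappan n x)) (Set.Icc 0 T)) (Set.Icc 0 T) t
    - discLap n (f t) (kappan n x) - b (f t (kappan n x))) / σ (f t (kappan n x))

end


section Aux

open Real Filter Finset Topology



/-- sum over `Icc 1 N` as shifted range sum -/
lemma sum_Icc_one_eq (g : ℕ → ℝ) (N : ℕ) :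
    ∑ j ∈ Finset.Icc 1 N, g j = ∑ i ∈ Finset.range N, g (i + 1) := by
  rw [← Finset.Ico_add_one_right_eq_Icc, Finset.sum_Ico_eq_sum_range]
  simp [add_comm]

/-- bound on partial sums of sin (j θ) -/
lemma sin_partial_sum_bound (θ : ℝ) (hθ : Real.sin (θ / 2) ≠ 0) (n : ℕ) :
    ‖∑ i ∈ Finset.range n, Real.sin ((i + 1) * θ)‖ ≤ |Real.sin (θ / 2)|⁻¹ := by
  have key : ∀ i : ℕ, 2 * Real.sin (θ / 2) * Real.sin ((i + 1) * θ)
      = Real.cos (((i : ℝ) + 1 / 2) * θ) - Real.cos (((i : ℝ) + 1 + 1 / 2) * θ) := by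
    intro i
    have h1 : ((i : ℝ) + 1 / 2) * θ = ((i : ℝ) + 1) * θ - θ / 2 := by ring
    have h2 : ((i : ℝ) + 1 + 1 / 2) * θ = ((i : ℝ) + 1) * θ + θ / 2 := by ring
    rw [h1, h2, Real.cos_sub, Real.cos_add]; ring
  have hsum : 2 * Real.sin (θ / 2) * ∑ i ∈ Finset.range n, Real.sin ((i + 1) * θ)
      = Real.cos ((1 / 2 : ℝ) * θ) - Real.cos (((n : ℝ) + 1 / 2) * θ) := by
    rw [Finset.mul_sum]
    have h := Finset.sum_range_sub' (fun i : ℕ => Real.cos (((i : ℝ) + 1 / 2) * θ)) n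
    simp only [Nat.cast_zero, zero_add] at h
    rw [← h]
    refine Finset.sum_congr rfl fun i _ => ?_
    rw [key i]
    push_cast
    ring_nf
  have h2 : |2 * Real.sin (θ / 2) * ∑ i ∈ Finset.range n, Real.sin ((i + 1) * θ)| ≤ 2 := by
    rw [hsum]
    calc |Real.cos ((1 / 2 : ℝ) * θ) - Real.cos (((n : ℝ) + 1 / 2) * θ)|
        ≤ |Real.cos ((1 / 2 : ℝ) * θ)| + |Real.cos (((n : ℝ) + 1 / 2) * θ)| := abs_sub _ _
      _ ≤ 1 + 1 := add_le_add (Real.abs_cos_le_one _) (Real.abs_cos_le_one _)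
      _ = 2 := by norm_num
  have hpos : 0 < |Real.sin (θ / 2)| := abs_pos.2 hθ
  rw [abs_mul, abs_mul, abs_two] at h2
  rw [Real.norm_eq_abs, inv_eq_one_div, le_div_iff₀ hpos]
  nlinarith [abs_nonneg (∑ i ∈ Finset.range n, Real.sin ((i + 1) * θ))]

/-- convergence of the sawtooth series -/
lemma sawtooth_conv (u : ℝ) :
    ∃ L : ℝ, Tendsto (fun N : ℕ => ∑ j ∈ Finset.Icc 1 N, Real.sin (j * π * u) / j)
      atTop (𝓝 L) := by
  by_cases h : Real.sin (π * u / 2) = 0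
  · refine ⟨0, ?_⟩
    obtain ⟨m, hm⟩ := Real.sin_eq_zero_iff.mp h
    have hu : π * u = 2 * m * π := by linarith
    have hz : ∀ j : ℕ, Real.sin (j * π * u) = 0 := by
      intro j
      have harg : (j : ℝ) * π * u = ((2 * m * j : ℤ) : ℝ) * π := by
        push_cast
        nlinarith [hu]
      rw [harg, Real.sin_int_mul_pi]
    have hterm : ∀ N : ℕ, ∑ j ∈ Finset.Icc 1 N, Real.sin (j * π * u) / j = 0 := by
      intro N
      exact Finset.sum_eq_zero fun j _ => by rw [hz j, zero_div]
    simpa [hterm] using tendsto_const_nhds (α := ℝ) (f := atTop (α := ℕ))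
  · have hrw : (fun N : ℕ => ∑ j ∈ Finset.Icc 1 N, Real.sin (j * π * u) / j)
        = fun N : ℕ => ∑ i ∈ Finset.range N,
            ((i : ℝ) + 1)⁻¹ • Real.sin (((i : ℝ) + 1) * (π * u)) := by
      funext N
      rw [sum_Icc_one_eq (fun j => Real.sin (j * π * u) / j) N]
      refine Finset.sum_congr rfl fun i _ => ?_
      rw [smul_eq_mul]
      push_cast
      rw [div_eq_inv_mul, mul_assoc]
    have hant : Antitone (fun i : ℕ => ((i : ℝ) + 1)⁻¹) := by
      intro a b hab
      have h1 : (0 : ℝ) < (a : ℝ) + 1 := by positivity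
      have h2 : ((a : ℝ) + 1) ≤ (b : ℝ) + 1 := by
        have : (a : ℝ) ≤ b := by exact_mod_cast hab
        linarith
      exact inv_anti₀ h1 h2
    have h0 : Tendsto (fun i : ℕ => ((i : ℝ) + 1)⁻¹) atTop (𝓝 0) := by
      simpa [one_div] using tendsto_one_div_add_atTop_nhds_zero_nat (𝕜 := ℝ)
    have hb : ∀ n : ℕ, ‖∑ i ∈ Finset.range n, Real.sin (((i : ℝ) + 1) * (π * u))‖
        ≤ |Real.sin (π * u / 2)|⁻¹ := fun n => sin_partial_sum_bound (π * u) h n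
    have hcs : CauchySeq fun n : ℕ => ∑ i ∈ Finset.range n,
        ((i : ℝ) + 1)⁻¹ • Real.sin (((i : ℝ) + 1) * (π * u)) :=
      hant.cauchySeq_series_mul_of_tendsto_zero_of_bounded h0 hb
    rw [hrw]
    exact cauchySeq_tendsto_of_complete hcs

/-- trig identity -/
lemma four_sin (T X Z : ℝ) :
    Real.sin (T + X - Z) + Real.sin (T - X + Z) - Real.sin (T + X + Z) - Real.sin (T - X - Z)
      = 4 * Real.sin T * Real.sin X * Real.sin Z := by
  simp [Real.sin_add, Real.sin_sub, Real.cos_add, Real.cos_sub]; ring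

/-- the Green partial sums converge to greenG -/
lemma greenG_tendsto (t x z : ℝ) :
    Tendsto (fun N : ℕ => ∑ j ∈ Finset.Icc 1 N, greenTerm j t x z) atTop
      (𝓝 (greenG t x z)) := by
  obtain ⟨LA, hA⟩ := sawtooth_conv (t + x - z)
  obtain ⟨LB, hB⟩ := sawtooth_conv (t - x + z)
  obtain ⟨LC, hC⟩ := sawtooth_conv (t + x + z)
  obtain ⟨LD, hD⟩ := sawtooth_conv (t - x - z)
  have hterm : ∀ j : ℕ, 1 ≤ j → greenTerm j t x z
      = (1 / (2 * π)) * (Real.sin (j * π * (t + x - z)) / j + Real.sin (j * π * (t - x + z)) / j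
          - Real.sin (j * π * (t + x + z)) / j - Real.sin (j * π * (t - x - z)) / j) := by
    intro j hj
    have hj0 : (j : ℝ) ≠ 0 := Nat.cast_ne_zero.2 (by omega)
    have hsqrt : Real.sqrt 2 * Real.sqrt 2 = 2 := Real.mul_self_sqrt (by norm_num)
    have comb : ∀ a b c d : ℝ, a / (j : ℝ) + b / j - c / j - d / j = (a + b - c - d) / j := by
      intros; ring
    have e1 : (j : ℝ) * π * (t + x - z) = j * π * t + j * π * x - j * π * z := by ring
    have e2 : (j : ℝ) * π * (t - x + z) = j * π * t - j * π * x + j * π * z := by ring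
    have e3 : (j : ℝ) * π * (t + x + z) = j * π * t + j * π * x + j * π * z := by ring
    have e4 : (j : ℝ) * π * (t - x - z) = j * π * t - j * π * x - j * π * z := by ring
    have lhs_eq : greenTerm j t x z = Real.sqrt 2 * Real.sqrt 2
        * (Real.sin (j * π * t) * Real.sin (j * π * x) * Real.sin (j * π * z)) / (j * π) := by
      simp only [greenTerm, phi]; ring
    rw [lhs_eq, hsqrt, comb, e1, e2, e3, e4, four_sin]
    field_simp
    ring
  have hfun : ∀ N : ℕ, ∑ j ∈ Finset.Icc 1 N, greenTerm j t x z
      = (1 / (2 * π)) * ((∑ j ∈ Finset.Icc 1 N, Real.sin (j * π * (t + x - z)) / j)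
          + (∑ j ∈ Finset.Icc 1 N, Real.sin (j * π * (t - x + z)) / j)
          - (∑ j ∈ Finset.Icc 1 N, Real.sin (j * π * (t + x + z)) / j)
          - (∑ j ∈ Finset.Icc 1 N, Real.sin (j * π * (t - x - z)) / j)) := by
    intro N
    rw [Finset.sum_congr rfl (fun j hj => hterm j (Finset.mem_Icc.1 hj).1), ← Finset.mul_sum]
    congr 1
    rw [Finset.sum_sub_distrib, Finset.sum_sub_distrib, Finset.sum_add_distrib]
  have hlim : Tendsto (fun N : ℕ => ∑ j ∈ Finset.Icc 1 N, greenTerm j t x z) atTop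
      (𝓝 ((1 / (2 * π)) * (LA + LB - LC - LD))) := by
    have := (((hA.add hB).sub hC).sub hD).const_mul (1 / (2 * π))
    exact this.congr fun N => (hfun N).symm
  have : greenG t x z = (1 / (2 * π)) * (LA + LB - LC - LD) := hlim.limUnder_eq
  rw [this]
  exact hlim

/-- ∫₀¹ cos(c z) dz -/
lemma integral_cos_const_mul (c : ℝ) (hc : c ≠ 0) :
    ∫ z in (0:ℝ)..1, Real.cos (c * z) = Real.sin c / c := by
  rw [intervalIntegral.integral_comp_mul_left (fun x => Real.cos x) hc]
  simp [integral_cos, div_eq_inv_mul]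

/-- orthogonality of sines -/
lemma sin_orth {j k : ℕ} (hj : 1 ≤ j) (hk : 1 ≤ k) :
    (∫ z in (0:ℝ)..1, Real.sin (j * π * z) * Real.sin (k * π * z))
      = if j = k then 1 / 2 else 0 := by
  have hrw : ∀ z : ℝ, Real.sin (j * π * z) * Real.sin (k * π * z)
      = (Real.cos ((((j : ℝ) - k) * π) * z) - Real.cos ((((j : ℝ) + k) * π) * z)) / 2 := by
    intro z
    have e1 : (((j : ℝ) - k) * π) * z = j * π * z - k * π * z := by ring
    have e2 : (((j : ℝ) + k) * π) * z = j * π * z + k * π * z := by ring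
    rw [e1, e2, Real.cos_sub, Real.cos_add]; ring
  rw [intervalIntegral.integral_congr (fun z _ => hrw z), intervalIntegral.integral_div,
    intervalIntegral.integral_sub
      (Continuous.intervalIntegrable
        (by fun_prop : Continuous fun z : ℝ => Real.cos ((((j : ℝ) - k) * π) * z)) 0 1)
      (Continuous.intervalIntegrable
        (by fun_prop : Continuous fun z : ℝ => Real.cos ((((j : ℝ) + k) * π) * z)) 0 1)]
  have hI2 : (∫ z in (0:ℝ)..1, Real.cos ((((j : ℝ) + k) * π) * z)) = 0 := by
    have hne : ((j : ℝ) + k) * π ≠ 0 := by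
      have : (0 : ℝ) < (j : ℝ) + k := by
        have : (1 : ℝ) ≤ (j : ℝ) := by exact_mod_cast hj
        positivity
      positivity
    rw [integral_cos_const_mul _ hne]
    have harg : ((j : ℝ) + k) * π = ((j + k : ℕ) : ℝ) * π := by push_cast; ring
    rw [harg, Real.sin_nat_mul_pi, zero_div]
  by_cases hjk : j = k
  · subst hjk
    have h0 : ((j : ℝ) - j) * π = 0 := by ring
    simp only [h0, zero_mul, Real.cos_zero, hI2, if_pos]
    simp
  · have hne : ((j : ℝ) - k) * π ≠ 0 := by
      have : ((j : ℝ) - k) ≠ 0 := sub_ne_zero.2 (by exact_mod_cast hjk)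
      exact mul_ne_zero this Real.pi_ne_zero
    have hI1 : (∫ z in (0:ℝ)..1, Real.cos ((((j : ℝ) - k) * π) * z)) = 0 := by
      rw [integral_cos_const_mul _ hne]
      have harg : ((j : ℝ) - k) * π = (((j : ℤ) - k : ℤ) : ℝ) * π := by push_cast; ring
      rw [harg, Real.sin_int_mul_pi, zero_div]
    simp [hjk, hI1, hI2]

/-- Parseval for finite sine sums -/
lemma ortho_sum (c : ℕ → ℝ) (N : ℕ) :
    (∫ z in (0:ℝ)..1, (∑ j ∈ Finset.Icc 1 N, c j * phi j z) ^ 2)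
      = ∑ j ∈ Finset.Icc 1 N, (c j) ^ 2 := by
  have hsqrt : Real.sqrt 2 * Real.sqrt 2 = 2 := Real.mul_self_sqrt (by norm_num)
  have hphic : ∀ j : ℕ, Continuous (phi j) := by
    intro j
    unfold phi
    fun_prop
  have hrw : ∀ z : ℝ, (∑ j ∈ Finset.Icc 1 N, c j * phi j z) ^ 2
      = ∑ j ∈ Finset.Icc 1 N, ∑ k ∈ Finset.Icc 1 N, c j * phi j z * (c k * phi k z) := by
    intro z; rw [sq, Finset.sum_mul_sum]
  rw [intervalIntegral.integral_congr (fun z _ => hrw z)]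
  rw [intervalIntegral.integral_finset_sum (fun j _ =>
    (Continuous.intervalIntegrable (by fun_prop) 0 1))]
  have hIjk : ∀ j ∈ Finset.Icc 1 N, ∀ k ∈ Finset.Icc 1 N,
      (∫ z in (0:ℝ)..1, c j * phi j z * (c k * phi k z))
        = if j = k then (c j) ^ 2 else 0 := by
    intro j hj k hk
    have hj1 := (Finset.mem_Icc.1 hj).1
    have hk1 := (Finset.mem_Icc.1 hk).1
    have hpt : ∀ z : ℝ, c j * phi j z * (c k * phi k z)
        = (c j * c k * (Real.sqrt 2 * Real.sqrt 2))
            * (Real.sin (j * π * z) * Real.sin (k * π * z)) := by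
      intro z; unfold phi; ring
    rw [intervalIntegral.integral_congr (fun z _ => hpt z),
      intervalIntegral.integral_const_mul, sin_orth hj1 hk1, hsqrt]
    by_cases h : j = k
    · subst h; simp; ring
    · simp [h]
  rw [Finset.sum_congr rfl (fun j hj => intervalIntegral.integral_finset_sum
    (fun k _ => (Continuous.intervalIntegrable (by fun_prop) 0 1)))]
  rw [Finset.sum_congr rfl (fun j hj => Finset.sum_congr rfl (fun k hk => hIjk j hj k hk))]
  refine Finset.sum_congr rfl fun j hj => ?_
  rw [Finset.sum_ite_eq (Finset.Icc 1 N) j (fun _ => (c j) ^ 2), if_pos hj]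

/-- term bound -/
lemma term_bound (t x y : ℝ) (j : ℕ) :
    (Real.sin (j * π * t)) ^ 2 / ((j : ℝ) ^ 2 * π ^ 2) * |phi j x - phi j y| ^ 2
      ≤ min (2 * |x - y| ^ 2) (((j : ℝ) ^ 2)⁻¹) := by
  rcases Nat.eq_zero_or_pos j with rfl | hj
  · have h1 : phi 0 x - phi 0 y = 0 := by simp [phi]
    have h2 : (Real.sin ((0:ℕ) * π * t)) ^ 2 / (((0:ℕ) : ℝ) ^ 2 * π ^ 2)
        * |phi 0 x - phi 0 y| ^ 2 = 0 := by
      rw [h1, abs_zero]; ring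
    rw [h2]
    have h3 : ((((0:ℕ)):ℝ) ^ 2)⁻¹ = 0 := by norm_num
    rw [h3]
    exact le_min (by positivity) le_rfl
  · have hjr : (0 : ℝ) < (j : ℝ) := by exact_mod_cast hj
    have hpi := Real.pi_pos
    have hjp : (0 : ℝ) < (j : ℝ) ^ 2 * π ^ 2 := by positivity
    have habs : |phi j x - phi j y| ^ 2
        = 2 * (Real.sin (j * π * x) - Real.sin (j * π * y)) ^ 2 := by
      rw [sq_abs]
      have h2 : phi j x - phi j y
          = Real.sqrt 2 * (Real.sin (j * π * x) - Real.sin (j * π * y)) := by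
        unfold phi; ring
      rw [h2, mul_pow, Real.sq_sqrt (by norm_num : (0:ℝ) ≤ 2)]
    set d := Real.sin (j * π * x) - Real.sin (j * π * y) with hd
    have hdabs : |d| ≤ (j : ℝ) * π * |x - y| := by
      rw [hd, Real.sin_sub_sin, abs_mul, abs_mul, abs_two]
      have harg : ((j : ℝ) * π * x - j * π * y) / 2 = (j : ℝ) * π * (x - y) / 2 := by ring
      calc 2 * |Real.sin (((j:ℝ) * π * x - j * π * y) / 2)|
            * |Real.cos (((j:ℝ) * π * x + j * π * y) / 2)|
          ≤ 2 * |((j:ℝ) * π * x - j * π * y) / 2| * 1 := by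
            refine mul_le_mul ?_ (Real.abs_cos_le_one _) (abs_nonneg _) (by positivity)
            have h := Real.abs_sin_le_abs (x := ((j:ℝ) * π * x - j * π * y) / 2)
            linarith
        _ = (j : ℝ) * π * |x - y| := by
            rw [mul_one, harg, abs_div, abs_mul,
              abs_of_pos (show (0:ℝ) < (j:ℝ) * π by positivity), abs_two]
            ring
    have hd1 : d ^ 2 ≤ (j : ℝ) ^ 2 * π ^ 2 * |x - y| ^ 2 := by
      have h := mul_self_le_mul_self (abs_nonneg d) hdabs
      calc d ^ 2 = |d| * |d| := by rw [sq]; exact (abs_mul_abs_self d).symm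
        _ ≤ ((j : ℝ) * π * |x - y|) * ((j : ℝ) * π * |x - y|) := h
        _ = (j : ℝ) ^ 2 * π ^ 2 * |x - y| ^ 2 := by ring
    have hd2 : d ^ 2 ≤ 4 := by
      have h1 := Real.neg_one_le_sin ((j : ℝ) * π * x)
      have h2 := Real.sin_le_one ((j : ℝ) * π * x)
      have h3 := Real.neg_one_le_sin ((j : ℝ) * π * y)
      have h4 := Real.sin_le_one ((j : ℝ) * π * y)
      nlinarith
    have hs : (Real.sin ((j : ℝ) * π * t)) ^ 2 ≤ 1 := Real.sin_sq_le_one _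
    have hsn : (0 : ℝ) ≤ (Real.sin ((j : ℝ) * π * t)) ^ 2 := sq_nonneg _
    refine le_min ?_ ?_
    · rw [habs, div_mul_eq_mul_div, div_le_iff₀ hjp]
      nlinarith [sq_nonneg d]
    · have hpi2 : (8 : ℝ) ≤ π ^ 2 := by nlinarith [Real.pi_gt_three]
      rw [habs, div_mul_eq_mul_div, div_le_iff₀ hjp]
      have hkey : ((j : ℝ) ^ 2)⁻¹ * ((j : ℝ) ^ 2 * π ^ 2) = π ^ 2 := by
        field_simp
      rw [hkey]
      nlinarith [sq_nonneg d]

lemma term_nonneg (t x y : ℝ) (j : ℕ) :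
    0 ≤ (Real.sin (j * π * t)) ^ 2 / ((j : ℝ) ^ 2 * π ^ 2) * |phi j x - phi j y| ^ 2 := by
  positivity

lemma summable_min (δ : ℝ) (hδ : 0 ≤ δ) :
    Summable (fun j : ℕ => min (2 * δ ^ 2) (((j : ℝ) ^ 2)⁻¹)) := by
  refine Summable.of_nonneg_of_le (fun j => le_min (by positivity) (by positivity))
    (fun j => min_le_right _ _) ?_
  exact (summable_nat_pow_inv (p := 2)).2 one_lt_two

lemma tsum_min_bound (δ : ℝ) (hδ0 : 0 < δ) (hδ1 : δ ≤ 1) :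
    (∑' j : ℕ, min (2 * δ ^ 2) (((j : ℝ) ^ 2)⁻¹)) ≤ 8 * δ := by
  set v := fun j : ℕ => min (2 * δ ^ 2) (((j : ℝ) ^ 2)⁻¹) with hv
  have hvnn : ∀ j : ℕ, 0 ≤ v j := fun j => le_min (by positivity) (by positivity)
  set m := ⌈1 / δ⌉₊ with hmdef
  set k := m + 1 with hkdef
  have hsum := summable_min δ hδ0.le
  have hsplit := Summable.sum_add_tsum_nat_add k hsum
  rw [← hsplit]
  have hm : (1 : ℝ) / δ ≤ m := Nat.le_ceil _
  have hm' : (m : ℝ) ≤ 1 / δ + 1 := (Nat.ceil_lt_add_one (by positivity)).le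
  have h1δ : (1 : ℝ) ≤ 1 / δ := by rw [le_div_iff₀ hδ0]; linarith
  have hhead : ∑ i ∈ Finset.range k, v i ≤ (k : ℝ) * (2 * δ ^ 2) := by
    calc ∑ i ∈ Finset.range k, v i ≤ ∑ _i ∈ Finset.range k, 2 * δ ^ 2 :=
          Finset.sum_le_sum fun i _ => min_le_left _ _
      _ = (k : ℝ) * (2 * δ ^ 2) := by
          rw [Finset.sum_const, Finset.card_range, nsmul_eq_mul]
  have hk1 : (k : ℝ) ≤ 3 / δ := by
    have hcast : (k : ℝ) = (m : ℝ) + 1 := by push_cast [hkdef]; ring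
    have h3 : 3 / δ = 3 * (1 / δ) := by ring
    rw [hcast, h3]
    linarith
  have htail : (∑' i : ℕ, v (i + k)) ≤ 2 * δ := by
    have h1 : (∑' i : ℕ, v (i + k)) ≤ 2 / ((m : ℝ) + 1) := by
      apply Real.tsum_le_of_sum_range_le (fun n => hvnn _)
      intro n
      calc ∑ i ∈ Finset.range n, v (i + k)
          ≤ ∑ i ∈ Finset.range n, (((i + k : ℕ) : ℝ) ^ 2)⁻¹ :=
            Finset.sum_le_sum fun i _ => min_le_right _ _
        _ = ∑ i2 ∈ Finset.Ico k (k + n), ((i2 : ℝ) ^ 2)⁻¹ := by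
            rw [Finset.sum_Ico_eq_sum_range]
            simp only [Nat.add_sub_cancel_left]
            exact Finset.sum_congr rfl fun i _ => by rw [add_comm]
        _ ≤ ∑ i2 ∈ Finset.Ioo m (k + n), ((i2 : ℝ) ^ 2)⁻¹ := by
            apply Finset.sum_le_sum_of_subset_of_nonneg
            · intro a ha
              rw [Finset.mem_Ico] at ha
              rw [Finset.mem_Ioo]
              omega
            · intro a _ _; positivity
        _ ≤ 2 / ((m : ℝ) + 1) := by
            have h := sum_Ioo_inv_sq_le (α := ℝ) m (k + n)
            simpa using h
    have h2 : 2 / ((m : ℝ) + 1) ≤ 2 * δ := by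
      rw [div_le_iff₀ (by positivity)]
      have h3 : (1 : ℝ) / δ ≤ (m : ℝ) + 1 := by linarith
      rw [div_le_iff₀ hδ0] at h3
      nlinarith
    exact h1.trans h2
  have hhead2 : (k : ℝ) * (2 * δ ^ 2) ≤ 6 * δ := by
    have h6 : (3 / δ) * (2 * δ ^ 2) = 6 * δ := by field_simp; ring
    calc (k : ℝ) * (2 * δ ^ 2) ≤ (3 / δ) * (2 * δ ^ 2) := by
          apply mul_le_mul_of_nonneg_right hk1 (by positivity)
      _ = 6 * δ := h6
  linarith [hhead, htail, hhead2]

/-- the master bound on the tsum -/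
lemma key_tsum (t x y : ℝ) (hxy : |x - y| ≤ 1) :
    Summable (fun j : ℕ =>
      (Real.sin (j * π * t)) ^ 2 / ((j : ℝ) ^ 2 * π ^ 2) * |phi j x - phi j y| ^ 2) ∧
    (∑' j : ℕ, (Real.sin (j * π * t)) ^ 2 / ((j : ℝ) ^ 2 * π ^ 2) * |phi j x - phi j y| ^ 2)
      ≤ 8 * |x - y| := by
  have hb := fun j => term_bound t x y j
  have hnn := fun j => term_nonneg t x y j
  have hsummmin := summable_min |x - y| (abs_nonneg _)
  have hsumm : Summable (fun j : ℕ =>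
      (Real.sin (j * π * t)) ^ 2 / ((j : ℝ) ^ 2 * π ^ 2) * |phi j x - phi j y| ^ 2) :=
    Summable.of_nonneg_of_le hnn hb hsummmin
  refine ⟨hsumm, ?_⟩
  rcases eq_or_lt_of_le (abs_nonneg (x - y)) with h0 | hpos
  · have hxy0 : x - y = 0 := abs_eq_zero.1 h0.symm
    have hxy : x = y := by linarith [sub_eq_zero.1 hxy0]
    subst hxy
    simp [sub_self]
  · calc _ ≤ ∑' j : ℕ, min (2 * |x - y| ^ 2) (((j : ℝ) ^ 2)⁻¹) :=
        Summable.tsum_le_tsum hb hsumm hsummmin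
      _ ≤ 8 * |x - y| := tsum_min_bound _ hpos hxy

end Aux

open Topology in
theorem stmt1 (T : ℝ) (hT : 0 < T) :
    ∃ K : ℝ, 0 < K ∧ ∀ t ∈ Set.Icc (0:ℝ) T, ∀ x ∈ Set.Icc (0:ℝ) 1, ∀ y ∈ Set.Icc (0:ℝ) 1,
      (∫ z in (0:ℝ)..1, |greenG t x z - greenG t y z|^2) ≤ K * |x - y| ∧
      (∑' j : ℕ, (Real.sin (j * Real.pi * t))^2 / ((j:ℝ)^2 * Real.pi^2) * |phi j x - phi j y|^2)
        ≤ K * |x - y| := by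
  refine ⟨8, by norm_num, ?_⟩
  intro t ht x hx y hy
  have hxy1 : |x - y| ≤ 1 := by
    rw [abs_le]
    constructor <;> [linarith [hx.1, hy.2]; linarith [hx.2, hy.1]]
  obtain ⟨hsumm, htsum⟩ := key_tsum t x y hxy1
  refine ⟨?_, htsum⟩
  set g : ℝ → ℝ := fun z => greenG t x z - greenG t y z with hg
  set D : ℕ → ℝ → ℝ :=
    fun N z => ∑ j ∈ Finset.Icc 1 N, (greenTerm j t x z - greenTerm j t y z) with hDdef
  set c : ℕ → ℝ :=
    fun j => Real.sin (j * Real.pi * t) / (j * Real.pi) * (phi j x - phi j y) with hcdef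
  have hD : ∀ (N : ℕ) (z : ℝ), D N z = ∑ j ∈ Finset.Icc 1 N, c j * phi j z := by
    intro N z
    refine Finset.sum_congr rfl fun j _ => ?_
    simp only [greenTerm, hcdef]
    ring
  have hcoef : ∀ j : ℕ, (c j) ^ 2
      = (Real.sin (j * Real.pi * t)) ^ 2 / ((j : ℝ) ^ 2 * Real.pi ^ 2)
        * |phi j x - phi j y| ^ 2 := by
    intro j
    simp only [hcdef]
    rw [mul_pow, div_pow, mul_pow, sq_abs]
  have hpart : ∀ N : ℕ, (∫ z in (0:ℝ)..1, (D N z) ^ 2) ≤ 8 * |x - y| := by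
    intro N
    have : (∫ z in (0:ℝ)..1, (D N z) ^ 2)
        = ∫ z in (0:ℝ)..1, (∑ j ∈ Finset.Icc 1 N, c j * phi j z) ^ 2 :=
      intervalIntegral.integral_congr fun z _ => by rw [hD N z]
    rw [this, ortho_sum c N]
    calc ∑ j ∈ Finset.Icc 1 N, (c j) ^ 2
        = ∑ j ∈ Finset.Icc 1 N, (Real.sin (j * Real.pi * t)) ^ 2
            / ((j : ℝ) ^ 2 * Real.pi ^ 2) * |phi j x - phi j y| ^ 2 :=
          Finset.sum_congr rfl fun j _ => hcoef j
      _ ≤ ∑' j : ℕ, (Real.sin (j * Real.pi * t)) ^ 2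
            / ((j : ℝ) ^ 2 * Real.pi ^ 2) * |phi j x - phi j y| ^ 2 :=
          Summable.sum_le_tsum _ (fun j _ => term_nonneg t x y j) hsumm
      _ ≤ 8 * |x - y| := htsum
  have hconv : ∀ z : ℝ, Tendsto (fun N : ℕ => D N z) atTop (𝓝 (g z)) := by
    intro z
    have h := (greenG_tendsto t x z).sub (greenG_tendsto t y z)
    refine h.congr fun N => ?_
    simp only [hDdef]
    rw [Finset.sum_sub_distrib]
  have hDcont : ∀ N : ℕ, Continuous (D N) := by
    intro N
    apply continuous_finset_sum
    intro j _
    simp only [greenTerm, phi]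
    fun_prop
  have hgmeas : Measurable g :=
    measurable_of_tendsto_metrizable (fun N => (hDcont N).measurable) (tendsto_pi_nhds.2 hconv)
  have hfatou : (∫⁻ z in Set.Ioc (0:ℝ) 1, ENNReal.ofReal ((g z) ^ 2))
      ≤ ENNReal.ofReal (8 * |x - y|) := by
    have hmeasN : ∀ N : ℕ, Measurable (fun z : ℝ => ENNReal.ofReal ((D N z) ^ 2)) :=
      fun N => (((hDcont N).pow 2)).measurable.ennreal_ofReal
    have hlim : ∀ z : ℝ, Tendsto (fun N : ℕ => ENNReal.ofReal ((D N z) ^ 2)) atTop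
        (𝓝 (ENNReal.ofReal ((g z) ^ 2))) := by
      intro z
      exact (ENNReal.continuous_ofReal.tendsto _).comp ((hconv z).pow 2)
    have hboundN : ∀ N : ℕ, (∫⁻ z in Set.Ioc (0:ℝ) 1, ENNReal.ofReal ((D N z) ^ 2))
        ≤ ENNReal.ofReal (8 * |x - y|) := by
      intro N
      have hint : MeasureTheory.IntegrableOn (fun z => (D N z) ^ 2) (Set.Ioc (0:ℝ) 1) :=
        ((hDcont N).pow 2).integrableOn_Ioc
      rw [← MeasureTheory.ofReal_integral_eq_lintegral_ofReal hint
        (ae_of_all _ fun z => sq_nonneg _)]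
      apply ENNReal.ofReal_le_ofReal
      rw [← intervalIntegral.integral_of_le zero_le_one]
      exact hpart N
    calc (∫⁻ z in Set.Ioc (0:ℝ) 1, ENNReal.ofReal ((g z) ^ 2))
        = ∫⁻ z in Set.Ioc (0:ℝ) 1,
            liminf (fun N : ℕ => ENNReal.ofReal ((D N z) ^ 2)) atTop :=
          lintegral_congr fun z => ((hlim z).liminf_eq).symm
      _ ≤ liminf (fun N : ℕ => ∫⁻ z in Set.Ioc (0:ℝ) 1, ENNReal.ofReal ((D N z) ^ 2)) atTop :=
          lintegral_liminf_le fun N => hmeasN N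
      _ ≤ liminf (fun _ : ℕ => ENNReal.ofReal (8 * |x - y|)) atTop :=
          Filter.liminf_le_liminf (Filter.Eventually.of_forall fun N => hboundN N)
      _ = ENNReal.ofReal (8 * |x - y|) := Filter.liminf_const _
  have hgoal : (∫ z in (0:ℝ)..1, |g z| ^ 2) ≤ 8 * |x - y| := by
    rw [intervalIntegral.integral_of_le zero_le_one]
    rw [MeasureTheory.integral_eq_lintegral_of_nonneg_ae
      (ae_of_all _ fun z => by positivity)
      ((hgmeas.abs.pow_const 2).aestronglyMeasurable)]
    have habs : ∀ z : ℝ, ENNReal.ofReal (|g z| ^ 2) = ENNReal.ofReal ((g z) ^ 2) :=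
      fun z => by rw [sq_abs]
    rw [lintegral_congr habs]
    exact ENNReal.toReal_le_of_le_ofReal (by positivity) hfatou
  exact hgoal
end

section
/- There exists a constant K>0, depending only on T, such that for all n∈ℕ⁺, all t∈[0,T] and all x∈[0,1], ∫_0^1 |G^n_t(x,z)|² dz ≤ K. -/
open MeasureTheory Real Filter
open scoped ENNReal

section AuxStmt2
open Finset

private lemma aux_stmt2_tele (n : ℕ) (θ : ℝ) :
    2 * Real.sin (θ/2) * ∑ i ∈ Finset.range n, Real.cos (i * θ)
      = Real.sin (n*θ - θ/2) + Real.sin (θ/2) := by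
  set f : ℕ → ℝ := fun i => Real.sin (i*θ - θ/2) with hf
  have key : ∀ i : ℕ, f (i+1) - f i = 2 * Real.sin (θ/2) * Real.cos (i*θ) := by
    intro i
    have hc : ((i:ℕ)+1 : ℕ) = ((i:ℝ)+1) := by push_cast; ring
    simp only [hf]
    push_cast
    rw [Real.sin_sub_sin]
    have h1 : (((i:ℝ)+1)*θ - θ/2 - ((i:ℝ)*θ - θ/2)) / 2 = θ/2 := by ring
    have h2 : (((i:ℝ)+1)*θ - θ/2 + ((i:ℝ)*θ - θ/2)) / 2 = (i:ℝ)*θ := by ring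
    rw [h1, h2]
  calc 2 * Real.sin (θ/2) * ∑ i ∈ Finset.range n, Real.cos (i * θ)
      = ∑ i ∈ Finset.range n, (f (i+1) - f i) := by
        rw [Finset.mul_sum]; exact Finset.sum_congr rfl fun i _ => (key i).symm
    _ = f n - f 0 := Finset.sum_range_sub f n
    _ = Real.sin (n*θ - θ/2) + Real.sin (θ/2) := by
        simp [hf, Real.sin_neg]

private lemma aux_stmt2_sum_cos_eq {n m : ℕ} (hm0 : 0 < m) (hm : m < 2*n) :
    ∑ i ∈ Finset.range n, Real.cos (m*π*i/n) = if Even m then 0 else 1 := by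
  have hn : 0 < n := by omega
  set θ : ℝ := m*π/n with hθ
  have hn' : (0:ℝ) < n := by exact_mod_cast hn
  have hφpos : 0 < Real.sin (θ/2) := by
    apply Real.sin_pos_of_pos_of_lt_pi
    · have : (0:ℝ) < m * π := by positivity
      positivity
    · rw [hθ, div_div, div_lt_iff₀ (by positivity)]
      have : (m:ℝ) < 2*n := by exact_mod_cast hm
      nlinarith [Real.pi_pos]
  have h1 : ∑ i ∈ Finset.range n, Real.cos (m*π*i/n)
      = ∑ i ∈ Finset.range n, Real.cos (i * θ) := by
    apply Finset.sum_congr rfl; intro i _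
    congr 1; rw [hθ]; ring
  have h2 := aux_stmt2_tele n θ
  have hnθ : (n:ℝ)*θ = m*π := by rw [hθ]; field_simp
  rw [hnθ, Real.sin_nat_mul_pi_sub] at h2
  rw [h1]
  rcases Nat.even_or_odd m with he | ho
  · rw [if_pos he]
    rw [he.neg_one_pow] at h2
    nlinarith [hφpos]
  · rw [if_neg (Nat.not_even_iff_odd.mpr ho)]
    rw [ho.neg_one_pow] at h2
    nlinarith [hφpos]

private lemma aux_stmt2_ortho {n j k : ℕ} (hj1 : 1 ≤ j) (hjn : j ≤ n - 1) (hk1 : 1 ≤ k) (hkn : k ≤ n - 1) :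
    ∑ i ∈ Finset.range n, Real.sin (j*π*i/n) * Real.sin (k*π*i/n)
      = if j = k then (n:ℝ)/2 else 0 := by
  have hn : 2 ≤ n := by omega
  have hjk2n : j + k < 2*n := by omega
  have hprod : ∀ i : ℕ, Real.sin (j*π*i/n) * Real.sin (k*π*i/n)
      = (Real.cos ((j:ℝ)*π*i/n - (k:ℝ)*π*i/n) - Real.cos (((j+k:ℕ):ℝ)*π*i/n)) / 2 := by
    intro i
    have h : (((j+k:ℕ)):ℝ)*π*i/n = (j:ℝ)*π*i/n + (k:ℝ)*π*i/n := by push_cast; ring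
    rw [h, Real.cos_sub, Real.cos_add]; ring
  rw [Finset.sum_congr rfl fun i _ => hprod i, ← Finset.sum_div, Finset.sum_sub_distrib]
  have hS2 : ∑ i ∈ Finset.range n, Real.cos (((j+k:ℕ):ℝ)*π*i/n)
      = if Even (j+k) then 0 else 1 := aux_stmt2_sum_cos_eq (by omega) hjk2n
  by_cases hjk : j = k
  · subst hjk
    have hS1 : ∑ i ∈ Finset.range n, Real.cos ((j:ℝ)*π*i/n - (j:ℝ)*π*i/n) = n := by
      simp
    rw [hS1, hS2, if_pos (by exact Even.add_self j), if_pos rfl]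
    ring
  · rw [if_neg hjk]
    -- S1 with d = |j - k|
    set d : ℕ := if k ≤ j then j - k else k - j with hd
    have hd0 : 0 < d := by rw [hd]; split <;> omega
    have hd2n : d < 2*n := by rw [hd]; split <;> omega
    have hS1 : ∑ i ∈ Finset.range n, Real.cos ((j:ℝ)*π*i/n - (k:ℝ)*π*i/n)
        = if Even d then 0 else 1 := by
      rw [← aux_stmt2_sum_cos_eq hd0 hd2n]
      apply Finset.sum_congr rfl; intro i _
      rcases le_or_gt k j with h | h
      · have : (j:ℝ)*π*i/n - (k:ℝ)*π*i/n = ((d:ℕ):ℝ)*π*i/n := by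
          rw [hd, if_pos h]
          push_cast [Nat.cast_sub h]; ring
        rw [this]
      · have : (j:ℝ)*π*i/n - (k:ℝ)*π*i/n = -(((d:ℕ):ℝ)*π*i/n) := by
          rw [hd, if_neg (by omega)]
          push_cast [Nat.cast_sub h.le]; ring
        rw [this, Real.cos_neg]
    rw [hS1, hS2]
    have hpar : (Even d ↔ Even (j+k)) := by
      rw [hd]; rcases le_or_gt k j with h | h
      · rw [if_pos h, Nat.even_sub h, Nat.even_add]
      · rw [if_neg (by omega), Nat.even_sub h.le, Nat.even_add]
        tauto
    by_cases he : Even d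
    · rw [if_pos he, if_pos (hpar.mp he)]; ring
    · rw [if_neg he, if_neg (fun h => he (hpar.mpr h))]; ring

private lemma aux_stmt2_kappan_eq {n : ℕ} (hn : 1 ≤ n) {i : ℕ} {z : ℝ}
    (h1 : (i:ℝ)/n ≤ z) (h2 : z < ((i:ℝ)+1)/n) : kappan n z = (i:ℝ)/n := by
  have hn' : (0:ℝ) < n := by exact_mod_cast hn
  have hfl : ⌊z * n⌋ = (i:ℤ) := by
    rw [Int.floor_eq_iff]
    constructor
    · push_cast
      rw [div_le_iff₀ hn'] at h1; linarith
    · push_cast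
      rw [lt_div_iff₀ hn'] at h2
      exact h2
  unfold kappan; rw [hfl]; push_cast; ring

private lemma aux_stmt2_integral_comp_kappan {n : ℕ} (hn : 1 ≤ n) (g : ℝ → ℝ) :
    ∫ z in (0:ℝ)..1, g (kappan n z) = (1/n) * ∑ i ∈ Finset.range n, g ((i:ℝ)/n) := by
  have hn' : (0:ℝ) < n := by exact_mod_cast hn
  set a : ℕ → ℝ := fun i => (i:ℝ)/n with ha
  have hle : ∀ i : ℕ, a i ≤ a (i+1) := by
    intro i
    simp only [ha]
    rw [div_le_div_iff_of_pos_right hn']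
    push_cast; linarith
  have hcast : ∀ i : ℕ, a (i+1) = ((i:ℝ)+1)/n := by intro i; simp only [ha]; push_cast; ring
  have hmem : ∀ i : ℕ, ∀ᵐ z : ℝ, z ∈ Set.uIoc (a i) (a (i+1)) → g (kappan n z) = g ((i:ℝ)/n) := by
    intro i
    have h0 : ∀ᵐ z : ℝ, z ∉ ({a (i+1)} : Set ℝ) :=
      measure_eq_zero_iff_ae_notMem.mp (measure_singleton _)
    filter_upwards [h0] with z hz hmem
    rw [Set.uIoc_of_le (hle i)] at hmem
    have hlt : z < a (i+1) := lt_of_le_of_ne hmem.2 (by simpa using hz)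
    rw [aux_stmt2_kappan_eq hn (le_of_lt hmem.1) (by rw [← hcast i]; exact hlt)]
  have hint : ∀ i : ℕ, IntervalIntegrable (fun z => g (kappan n z)) volume (a i) (a (i+1)) := by
    intro i
    rw [intervalIntegrable_iff_integrableOn_Ioc_of_le (hle i)]
    have hc : IntegrableOn (fun _ : ℝ => g ((i:ℝ)/n)) (Set.Ioc (a i) (a (i+1))) volume :=
      integrableOn_const measure_Ioc_lt_top.ne
    apply hc.congr
    have := hmem i
    rw [Set.uIoc_of_le (hle i)] at this
    filter_upwards [ae_restrict_mem measurableSet_Ioc, ae_restrict_of_ae this] with z h1 h2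
    exact (h2 h1).symm
  have hval : ∀ i : ℕ, (∫ z in a i..a (i+1), g (kappan n z)) = (1/n) * g ((i:ℝ)/n) := by
    intro i
    rw [intervalIntegral.integral_congr_ae (hmem i), intervalIntegral.integral_const]
    rw [hcast i]
    simp only [ha, smul_eq_mul]
    ring
  have h0 : a 0 = 0 := by simp [ha]
  have h1 : a n = 1 := by simp only [ha]; field_simp
  calc ∫ z in (0:ℝ)..1, g (kappan n z) = ∫ z in (a 0)..(a n), g (kappan n z) := by rw [h0, h1]
    _ = ∑ i ∈ Finset.range n, ∫ z in a i..a (i+1), g (kappan n z) :=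
        (intervalIntegral.sum_integral_adjacent_intervals fun i _ => hint i).symm
    _ = ∑ i ∈ Finset.range n, (1/n) * g ((i:ℝ)/n) := Finset.sum_congr rfl fun i _ => hval i
    _ = (1/n) * ∑ i ∈ Finset.range n, g ((i:ℝ)/n) := by rw [Finset.mul_sum]

private lemma aux_stmt2_phi_abs (j : ℕ) (y : ℝ) : |phi j y| ≤ Real.sqrt 2 := by
  unfold phi
  rw [abs_mul, abs_of_nonneg (Real.sqrt_nonneg 2)]
  calc Real.sqrt 2 * |Real.sin (j * Real.pi * y)| ≤ Real.sqrt 2 * 1 := by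
        exact mul_le_mul_of_nonneg_left (Real.abs_sin_le_one _) (Real.sqrt_nonneg 2)
    _ = Real.sqrt 2 := mul_one _

private lemma aux_stmt2_Pin_abs {w : ℝ → ℝ} (hw : ∀ y, |w y| ≤ Real.sqrt 2) (n : ℕ) (x : ℝ) :
    |Pin n w x| ≤ Real.sqrt 2 := by
  set θ : ℝ := (n : ℝ) * x - (⌊x * n⌋ : ℝ) with hθ
  have hθ0 : 0 ≤ θ := by
    rw [hθ, mul_comm]
    exact Int.fract_nonneg (x * n)
  have hθ1 : θ < 1 := by
    rw [hθ, mul_comm]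
    exact Int.fract_lt_one (x * n)
  have hPin : Pin n w x = (1 - θ) * w (kappan n x) + θ * w (kappan n x + 1/n) := by
    unfold Pin; rw [← hθ]; ring
  rw [hPin]
  have h1 := hw (kappan n x)
  have h2 := hw (kappan n x + 1/n)
  calc |(1 - θ) * w (kappan n x) + θ * w (kappan n x + 1/n)|
      ≤ |(1 - θ) * w (kappan n x)| + |θ * w (kappan n x + 1/n)| := abs_add_le _ _
    _ = (1 - θ) * |w (kappan n x)| + θ * |w (kappan n x + 1/n)| := by
        rw [abs_mul, abs_mul, abs_of_nonneg (by linarith), abs_of_nonneg hθ0]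
    _ ≤ Real.sqrt 2 := by nlinarith [abs_nonneg (w (kappan n x)), abs_nonneg (w (kappan n x + 1/n))]

private lemma aux_stmt2_sum_inv_sq (m : ℕ) :
    ∑ j ∈ Finset.Icc 1 m, (1:ℝ)/(2*(j:ℝ)^2) ≤ 1 - 1/((m:ℝ)+1) := by
  induction m with
  | zero => simp
  | succ m ih =>
    rw [Finset.sum_Icc_succ_top (by omega)]
    have hm : (0:ℝ) < (m:ℝ) + 1 := by positivity
    have key : (1:ℝ)/(2*((m:ℝ)+1)^2) ≤ 1/((m:ℝ)+1) - 1/((m:ℝ)+1+1) := by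
      rw [div_sub_div _ _ (by positivity) (by positivity), div_le_div_iff₀ (by positivity) (by positivity)]
      ring_nf
      nlinarith
    push_cast
    push_cast at ih
    linarith

/-- √(cn n j) bound: j π √(cn n j) ≥ 2 j for 1 ≤ j ≤ n-1 -/
private lemma aux_stmt2_denom {n j : ℕ} (hj1 : 1 ≤ j) (hjn : j ≤ n - 1) (hn : 2 ≤ n) :
    2 * (j:ℝ) ≤ (j:ℝ) * Real.pi * Real.sqrt (cn n j) := by
  have hπ := Real.pi_pos
  have hn' : (0:ℝ) < n := by positivity
  have hj' : (0:ℝ) < j := by exact_mod_cast hj1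
  set q : ℝ := (j:ℝ) * Real.pi / (2 * n) with hq
  have hq0 : 0 < q := by positivity
  have hq2 : q ≤ Real.pi / 2 := by
    rw [hq, div_le_div_iff₀ (by positivity) (by norm_num)]
    have hjn' : (j:ℝ) ≤ n := by
      have : j ≤ n := by omega
      exact_mod_cast this
    nlinarith
  have hsq : Real.sqrt (cn n j) = Real.sin q / q := by
    unfold cn
    rw [← hq, ← div_pow]
    have hsin0 : 0 ≤ Real.sin q :=
      Real.sin_nonneg_of_nonneg_of_le_pi hq0.le (by linarith)
    exact Real.sqrt_sq (div_nonneg hsin0 hq0.le)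
  have hjordan : 2 / Real.pi * q ≤ Real.sin q := Real.mul_le_sin hq0.le hq2
  have hdiv : 2 / Real.pi ≤ Real.sin q / q := (le_div_iff₀ hq0).mpr hjordan
  rw [hsq]
  calc 2 * (j:ℝ) = (j:ℝ) * Real.pi * (2 / Real.pi) := by field_simp
    _ ≤ (j:ℝ) * Real.pi * (Real.sin q / q) := by
        exact mul_le_mul_of_nonneg_left hdiv (by positivity)

/-- discrete orthogonality for phi -/
private lemma aux_stmt2_phi_ortho {n j k : ℕ} (hj1 : 1 ≤ j) (hjn : j ≤ n - 1)
    (hk1 : 1 ≤ k) (hkn : k ≤ n - 1) :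
    (1/(n:ℝ)) * ∑ i ∈ Finset.range n, phi j ((i:ℝ)/n) * phi k ((i:ℝ)/n)
      = if j = k then 1 else 0 := by
  have hn : 2 ≤ n := by omega
  have hn' : (0:ℝ) < n := by positivity
  have hterm : ∀ i : ℕ, phi j ((i:ℝ)/n) * phi k ((i:ℝ)/n)
      = 2 * (Real.sin ((j:ℝ)*Real.pi*i/n) * Real.sin ((k:ℝ)*Real.pi*i/n)) := by
    intro i
    unfold phi
    have h1 : (j:ℝ) * Real.pi * ((i:ℝ)/n) = (j:ℝ)*Real.pi*i/n := by ring
    have h2 : (k:ℝ) * Real.pi * ((i:ℝ)/n) = (k:ℝ)*Real.pi*i/n := by ring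
    rw [h1, h2]
    have hss : Real.sqrt 2 * Real.sqrt 2 = 2 := Real.mul_self_sqrt (by norm_num)
    linear_combination (Real.sin ((j:ℝ)*Real.pi*i/n) * Real.sin ((k:ℝ)*Real.pi*i/n)) * hss
  rw [Finset.sum_congr rfl fun i _ => hterm i, ← Finset.mul_sum,
    aux_stmt2_ortho hj1 hjn hk1 hkn]
  by_cases h : j = k
  · rw [if_pos h, if_pos h]; field_simp
  · rw [if_neg h, if_neg h]; ring

end AuxStmt2

theorem stmt2 (T : ℝ) (hT : 0 < T) :
    ∃ K : ℝ, 0 < K ∧ ∀ n : ℕ, 1 ≤ n → ∀ t ∈ Set.Icc (0:ℝ) T, ∀ x ∈ Set.Icc (0:ℝ) 1,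
      (∫ z in (0:ℝ)..1, |greenGn n t x z|^2) ≤ K := by
  refine ⟨1, one_pos, ?_⟩
  intro n hn t ht x hx
  have hn' : (0:ℝ) < n := by positivity
  set a : ℕ → ℝ := fun j =>
    Real.sin (j * Real.pi * t * Real.sqrt (cn n j)) / (j * Real.pi * Real.sqrt (cn n j)) *
      Pin n (phi j) x with ha
  set F : ℝ → ℝ := fun y => (∑ j ∈ Finset.Icc 1 (n-1), a j * phi j y)^2 with hF
  have hG : ∀ z, |greenGn n t x z|^2 = F (kappan n z) := by
    intro z
    rw [sq_abs, hF]
    rfl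
  have step1 : (∫ z in (0:ℝ)..1, |greenGn n t x z|^2)
      = (1/(n:ℝ)) * ∑ i ∈ Finset.range n, F ((i:ℝ)/n) := by
    rw [← aux_stmt2_integral_comp_kappan hn F]
    exact intervalIntegral.integral_congr fun z _ => hG z
  have step2 : (1/(n:ℝ)) * ∑ i ∈ Finset.range n, F ((i:ℝ)/n)
      = ∑ j ∈ Finset.Icc 1 (n-1), ∑ k ∈ Finset.Icc 1 (n-1),
          (a j * a k) * ((1/(n:ℝ)) * ∑ i ∈ Finset.range n, phi j ((i:ℝ)/n) * phi k ((i:ℝ)/n)) := by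
    have hFi : ∀ i : ℕ, F ((i:ℝ)/n)
        = ∑ j ∈ Finset.Icc 1 (n-1), ∑ k ∈ Finset.Icc 1 (n-1),
            (a j * a k) * (phi j ((i:ℝ)/n) * phi k ((i:ℝ)/n)) := by
      intro i
      simp only [hF]
      rw [sq, Finset.sum_mul_sum]
      exact Finset.sum_congr rfl fun j _ => Finset.sum_congr rfl fun k _ => by ring
    rw [Finset.sum_congr rfl fun i _ => hFi i]
    rw [Finset.sum_comm]
    rw [Finset.mul_sum]
    refine Finset.sum_congr rfl fun j _ => ?_
    rw [Finset.sum_comm, Finset.mul_sum]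
    refine Finset.sum_congr rfl fun k _ => ?_
    rw [← Finset.mul_sum]
    ring
  have step3 : ∑ j ∈ Finset.Icc 1 (n-1), ∑ k ∈ Finset.Icc 1 (n-1),
        (a j * a k) * ((1/(n:ℝ)) * ∑ i ∈ Finset.range n, phi j ((i:ℝ)/n) * phi k ((i:ℝ)/n))
      = ∑ j ∈ Finset.Icc 1 (n-1), (a j)^2 := by
    refine Finset.sum_congr rfl fun j hj => ?_
    rw [Finset.mem_Icc] at hj
    have : ∀ k ∈ Finset.Icc 1 (n-1),
        (a j * a k) * ((1/(n:ℝ)) * ∑ i ∈ Finset.range n, phi j ((i:ℝ)/n) * phi k ((i:ℝ)/n))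
          = if j = k then (a j)^2 else 0 := by
      intro k hk
      rw [Finset.mem_Icc] at hk
      rw [aux_stmt2_phi_ortho hj.1 hj.2 hk.1 hk.2]
      by_cases h : j = k
      · rw [if_pos h, if_pos h, h]; ring
      · rw [if_neg h, if_neg h]; ring
    rw [Finset.sum_congr rfl this, Finset.sum_ite_eq (Finset.Icc 1 (n-1)) j (fun _ => (a j)^2),
      if_pos (Finset.mem_Icc.mpr hj)]
  have step4 : ∑ j ∈ Finset.Icc 1 (n-1), (a j)^2 ≤ 1 := by
    have hbound : ∀ j ∈ Finset.Icc 1 (n-1), (a j)^2 ≤ (1:ℝ)/(2*(j:ℝ)^2) := by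
      intro j hj
      rw [Finset.mem_Icc] at hj
      have hn2 : 2 ≤ n := by omega
      have hj' : (0:ℝ) < j := by exact_mod_cast hj.1
      have hd : 2 * (j:ℝ) ≤ (j:ℝ) * Real.pi * Real.sqrt (cn n j) :=
        aux_stmt2_denom hj.1 hj.2 hn2
      have hd0 : (0:ℝ) < (j:ℝ) * Real.pi * Real.sqrt (cn n j) := by linarith
      have hsin : |Real.sin (j * Real.pi * t * Real.sqrt (cn n j))| ≤ 1 :=
        Real.abs_sin_le_one _
      have hP : |Pin n (phi j) x| ≤ Real.sqrt 2 :=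
        aux_stmt2_Pin_abs (fun y => aux_stmt2_phi_abs j y) n x
      have habs : |a j| ≤ 1/(2*(j:ℝ)) * Real.sqrt 2 := by
        simp only [ha]
        rw [abs_mul, abs_div, abs_of_pos hd0]
        refine mul_le_mul ?_ hP (abs_nonneg _) (by positivity)
        rw [div_le_div_iff₀ hd0 (by positivity)]
        nlinarith
      calc (a j)^2 = |a j|^2 := (sq_abs _).symm
        _ ≤ (1/(2*(j:ℝ)) * Real.sqrt 2)^2 := by
            exact pow_le_pow_left₀ (abs_nonneg _) habs 2
        _ = (1:ℝ)/(2*(j:ℝ)^2) := by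
            rw [mul_pow, Real.sq_sqrt (by norm_num)]
            field_simp
    calc ∑ j ∈ Finset.Icc 1 (n-1), (a j)^2
        ≤ ∑ j ∈ Finset.Icc 1 (n-1), (1:ℝ)/(2*(j:ℝ)^2) := Finset.sum_le_sum hbound
      _ ≤ 1 - 1/(((n-1:ℕ):ℝ)+1) := aux_stmt2_sum_inv_sq (n-1)
      _ ≤ 1 := by
          have : (0:ℝ) < ((n-1:ℕ):ℝ)+1 := by positivity
          have h2 : (0:ℝ) < 1/(((n-1:ℕ):ℝ)+1) := by positivity
          linarith
  rw [step1, step2, step3]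
  exact step4
end

section
/- There exists a constant K>0, depending only on T, such that for all n∈ℕ⁺, all t∈[0,T] and all x,y∈[0,1], ∫_0^1 |G^n_t(x,z) − G^n_t(y,z)|² dz ≤ K·|x−y|. -/
open MeasureTheory Real Filter
open scoped ENNReal

section pin
variable {n : ℕ} {w : ℝ → ℝ}

lemma floor_grid (hn : 0 < n) (k : ℤ) : ⌊((k : ℝ)/n) * n⌋ = k := by
  have hn' : (n:ℝ) ≠ 0 := Nat.cast_ne_zero.mpr hn.ne'
  rw [div_mul_cancel₀ _ hn', Int.floor_intCast]

lemma kappan_grid (hn : 0 < n) (k : ℤ) : kappan n ((k:ℝ)/n) = (k:ℝ)/n := by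
  rw [kappan, floor_grid hn]

lemma pin_grid (hn : 0 < n) (w : ℝ → ℝ) (k : ℤ) : Pin n w ((k:ℝ)/n) = w ((k:ℝ)/n) := by
  have hn' : (n:ℝ) ≠ 0 := Nat.cast_ne_zero.mpr hn.ne'
  rw [Pin, kappan_grid hn, floor_grid hn, mul_div_cancel₀ _ hn']
  ring

lemma pin_eq (hn : 0 < n) (x : ℝ) :
    Pin n w x = w ((⌊x*n⌋:ℝ)/n) + ((n:ℝ)*x - ⌊x*n⌋) * (w ((⌊x*n⌋+1:ℝ)/n) - w ((⌊x*n⌋:ℝ)/n)) := by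
  have hn' : (n:ℝ) ≠ 0 := Nat.cast_ne_zero.mpr hn.ne'
  rw [Pin, kappan]
  have : (⌊x*n⌋:ℝ)/n + 1/n = (⌊x*n⌋+1:ℝ)/n := by field_simp
  rw [this]

lemma pin_bound (hn : 0 < n) {M : ℝ} (hM : ∀ k : ℤ, |w ((k:ℝ)/n)| ≤ M) (x : ℝ) : |Pin n w x| ≤ M := by
  rw [pin_eq hn]
  set a := ⌊x*n⌋ with ha
  have h0 : 0 ≤ (n:ℝ)*x - a := by
    have := Int.floor_le (x*n); simp only [ha]; nlinarith [this]
  have h1 : (n:ℝ)*x - a ≤ 1 := by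
    have := Int.lt_floor_add_one (x*n); simp only [ha]; push_cast at this ⊢; nlinarith
  have e : w ((a:ℝ)/n) + ((n:ℝ)*x - a) * (w ((a+1:ℝ)/n) - w ((a:ℝ)/n))
      = (1 - ((n:ℝ)*x - a)) * w ((a:ℝ)/n) + ((n:ℝ)*x - a) * w ((a+1:ℝ)/n) := by ring
  rw [e]
  have b1 : |w ((a:ℝ)/n)| ≤ M := hM a
  have b2 : |w ((a+1:ℝ)/n)| ≤ M := by have := hM (a+1); push_cast at this ⊢; exact this
  calc |(1 - ((n:ℝ)*x - a)) * w ((a:ℝ)/n) + ((n:ℝ)*x - a) * w ((a+1:ℝ)/n)|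
      ≤ |(1 - ((n:ℝ)*x - a)) * w ((a:ℝ)/n)| + |((n:ℝ)*x - a) * w ((a+1:ℝ)/n)| := abs_add_le _ _
    _ ≤ (1 - ((n:ℝ)*x - a)) * M + ((n:ℝ)*x - a) * M := by
        rw [abs_mul, abs_mul, abs_of_nonneg (by linarith), abs_of_nonneg h0]
        have hM0 : 0 ≤ M := le_trans (abs_nonneg _) b1
        gcongr <;> linarith
    _ = M := by ring

end pin

section lip
variable {n : ℕ} {w : ℝ → ℝ} {L : ℝ}

lemma pin_sub_same (hn : 0 < n) (hL : ∀ k : ℤ, |w ((k+1:ℝ)/n) - w ((k:ℝ)/n)| ≤ L/n)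
    {x y : ℝ} (h : ⌊x*n⌋ = ⌊y*n⌋) : |Pin n w x - Pin n w y| ≤ L * |x - y| := by
  have hn' : (0:ℝ) < n := Nat.cast_pos.mpr hn
  rw [pin_eq hn, pin_eq hn, h]
  have e : w ((⌊y*n⌋:ℝ)/n) + ((n:ℝ)*x - ⌊y*n⌋) * (w ((⌊y*n⌋+1:ℝ)/n) - w ((⌊y*n⌋:ℝ)/n))
      - (w ((⌊y*n⌋:ℝ)/n) + ((n:ℝ)*y - ⌊y*n⌋) * (w ((⌊y*n⌋+1:ℝ)/n) - w ((⌊y*n⌋:ℝ)/n)))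
      = ((n:ℝ)*(x-y)) * (w ((⌊y*n⌋+1:ℝ)/n) - w ((⌊y*n⌋:ℝ)/n)) := by ring
  rw [e, abs_mul, abs_mul, abs_of_nonneg hn'.le]
  have hb := hL ⌊y*n⌋
  calc (n:ℝ) * |x-y| * |w ((⌊y*n⌋+1:ℝ)/n) - w ((⌊y*n⌋:ℝ)/n)| ≤ (n:ℝ) * |x-y| * (L/n) := by
        gcongr
    _ = L * |x - y| := by field_simp

lemma pin_to_right (hn : 0 < n) (hL : ∀ k : ℤ, |w ((k+1:ℝ)/n) - w ((k:ℝ)/n)| ≤ L/n)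
    (x : ℝ) : |Pin n w ((⌊x*n⌋+1:ℝ)/n) - Pin n w x| ≤ L * ((⌊x*n⌋+1:ℝ)/n - x) := by
  have hn' : (0:ℝ) < n := Nat.cast_pos.mpr hn
  have hg : Pin n w ((⌊x*n⌋+1:ℝ)/n) = w ((⌊x*n⌋+1:ℝ)/n) := by
    have := pin_grid hn w (⌊x*n⌋+1)
    push_cast at this ⊢; exact this
  rw [hg, pin_eq hn]
  have e : w ((⌊x*n⌋+1:ℝ)/n) - (w ((⌊x*n⌋:ℝ)/n)
      + ((n:ℝ)*x - ⌊x*n⌋) * (w ((⌊x*n⌋+1:ℝ)/n) - w ((⌊x*n⌋:ℝ)/n)))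
      = ((⌊x*n⌋+1:ℝ) - n*x) * (w ((⌊x*n⌋+1:ℝ)/n) - w ((⌊x*n⌋:ℝ)/n)) := by ring
  rw [e, abs_mul]
  have h1 : (0:ℝ) ≤ (⌊x*n⌋+1:ℝ) - n*x := by
    have := Int.lt_floor_add_one (x*n); push_cast at this ⊢; nlinarith
  rw [abs_of_nonneg h1]
  have hb := hL ⌊x*n⌋
  calc ((⌊x*n⌋+1:ℝ) - n*x) * |w ((⌊x*n⌋+1:ℝ)/n) - w ((⌊x*n⌋:ℝ)/n)|
      ≤ ((⌊x*n⌋+1:ℝ) - n*x) * (L/n) := by gcongr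
    _ = L * ((⌊x*n⌋+1:ℝ)/n - x) := by field_simp

lemma pin_lip_le (hn : 0 < n) (hL0 : 0 ≤ L)
    (hL : ∀ k : ℤ, |w ((k+1:ℝ)/n) - w ((k:ℝ)/n)| ≤ L/n) :
    ∀ (k : ℕ) (x y : ℝ), x ≤ y → (⌊y*n⌋ - ⌊x*n⌋).toNat = k →
      |Pin n w x - Pin n w y| ≤ L * (y - x) := by
  have hn' : (0:ℝ) < n := Nat.cast_pos.mpr hn
  intro k
  induction k with
  | zero =>
    intro x y hxy hk
    have hmono : ⌊x*n⌋ ≤ ⌊y*n⌋ := Int.floor_le_floor (by nlinarith)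
    have : ⌊y*n⌋ - ⌊x*n⌋ ≤ 0 := by omega
    have heq : ⌊x*n⌋ = ⌊y*n⌋ := by omega
    have h2 := pin_sub_same hn hL heq
    have habs : |x - y| = y - x := by
      rw [abs_sub_comm]; exact abs_of_nonneg (sub_nonneg.mpr hxy)
    rwa [habs] at h2
  | succ k ih =>
    intro x y hxy hk
    have hlt : ⌊x*n⌋ < ⌊y*n⌋ := by omega
    set x' : ℝ := ((⌊x*n⌋:ℝ)+1)/n with hx'
    have hfx' : ⌊x'*n⌋ = ⌊x*n⌋ + 1 := by
      have := floor_grid hn (⌊x*n⌋+1)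
      push_cast at this ⊢; exact this
    have hx'y : x' ≤ y := by
      have h1 : ((⌊x*n⌋:ℝ)+1) ≤ (⌊y*n⌋:ℝ) := by exact_mod_cast hlt
      have h2 : (⌊y*n⌋:ℝ) ≤ y*n := Int.floor_le (y*n)
      rw [hx', div_le_iff₀ hn']; nlinarith
    have hk' : (⌊y*n⌋ - ⌊x'*n⌋).toNat = k := by rw [hfx']; omega
    have ih' := ih x' y hx'y hk'
    have hr := pin_to_right hn hL x
    calc |Pin n w x - Pin n w y|
        ≤ |Pin n w x - Pin n w x'| + |Pin n w x' - Pin n w y| := abs_sub_le _ _ _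
      _ ≤ L * (x' - x) + L * (y - x') := by
          rw [abs_sub_comm]
          exact add_le_add (by simpa using hr) ih'
      _ = L * (y - x) := by ring

lemma pin_lip (hn : 0 < n) (hL0 : 0 ≤ L)
    (hL : ∀ k : ℤ, |w ((k+1:ℝ)/n) - w ((k:ℝ)/n)| ≤ L/n) (x y : ℝ) :
    |Pin n w x - Pin n w y| ≤ L * |x - y| := by
  rcases le_total x y with h | h
  · have habs : |x - y| = y - x := by
      rw [abs_sub_comm]; exact abs_of_nonneg (sub_nonneg.mpr h)
    rw [habs]
    exact pin_lip_le hn hL0 hL _ x y h rfl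
  · have habs : |x - y| = x - y := abs_of_nonneg (sub_nonneg.mpr h)
    rw [habs, abs_sub_comm]
    exact pin_lip_le hn hL0 hL _ y x h rfl

end lip

section ortho

lemma cos_sum_eq (n : ℕ) (hn : 0 < n) (m : ℤ) (hm0 : m ≠ 0) (hm : m.natAbs < 2*n) :
    ∑ i ∈ Finset.range n, Real.cos ((m:ℝ) * Real.pi * i / n) = if Odd m then 1 else 0 := by
  have hn' : (0:ℝ) < n := Nat.cast_pos.mpr hn
  have hnC : (n:ℂ) ≠ 0 := Nat.cast_ne_zero.mpr hn.ne'
  set θ : ℝ := (m:ℝ) * Real.pi / n with hθ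
  set z : ℂ := Complex.exp (θ * Complex.I) with hz
  have hz1 : z ≠ 1 := by
    intro h
    rw [hz, Complex.exp_eq_one_iff] at h
    obtain ⟨k, hk⟩ := h
    have hk' : (θ:ℂ) * Complex.I = ((k:ℂ) * (2*Real.pi)) * Complex.I := by
      rw [hk]; push_cast; ring
    have hI := mul_right_cancel₀ Complex.I_ne_zero hk'
    have hreal : θ = (k:ℝ) * (2 * Real.pi) := by exact_mod_cast hI
    rw [hθ, div_eq_iff hn'.ne'] at hreal
    have hπ : Real.pi ≠ 0 := Real.pi_ne_zero
    have h2 : (m:ℝ) * Real.pi = ((k:ℝ) * (2*(n:ℝ))) * Real.pi := by linear_combination hreal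
    have h3 : (m:ℝ) = (k:ℝ) * (2*(n:ℝ)) := mul_right_cancel₀ hπ h2
    have hmk : m = k * (2*(n:ℤ)) := by exact_mod_cast h3
    rcases eq_or_ne k 0 with h0 | h0
    · exact hm0 (by simp [hmk, h0])
    · have h1 : 1 ≤ k.natAbs := Int.natAbs_pos.mpr h0
      have h4 : m.natAbs = k.natAbs * (2*n) := by
        rw [hmk, Int.natAbs_mul]
        congr 1
      have h5 : 2*n ≤ k.natAbs * (2*n) := Nat.le_mul_of_pos_left (2*n) h1
      omega
  have hzi : ∀ i : ℕ, (z ^ i).re = Real.cos ((m:ℝ) * Real.pi * i / n) := by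
    intro i
    rw [hz, ← Complex.exp_nat_mul]
    have : (i:ℂ) * (θ * Complex.I) = ((θ * i : ℝ) : ℂ) * Complex.I := by push_cast; ring
    rw [this, Complex.exp_ofReal_mul_I_re]
    congr 1
    rw [hθ]; ring
  have hsum : ∑ i ∈ Finset.range n, Real.cos ((m:ℝ) * Real.pi * i / n)
      = (∑ i ∈ Finset.range n, z ^ i).re := by
    rw [Complex.re_sum]
    exact Finset.sum_congr rfl fun i _ => (hzi i).symm
  have hgeom : ∑ i ∈ Finset.range n, z ^ i = (z ^ n - 1) / (z - 1) := geom_sum_eq hz1 n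
  have hzn : z ^ n = (-1 : ℂ) ^ m := by
    rw [hz, ← Complex.exp_nat_mul, ← Complex.exp_pi_mul_I, ← Complex.exp_int_mul]
    congr 1
    push_cast [hθ]
    field_simp
  rw [hsum, hgeom, hzn]
  rcases Int.even_or_odd m with he | ho
  · rw [he.neg_one_zpow]
    simp [Int.not_odd_iff_even.mpr he]
  · rw [ho.neg_one_zpow, if_pos ho]
    have hcos : z.re = Real.cos θ := by rw [hz, Complex.exp_ofReal_mul_I_re]
    have hsin : z.im = Real.sin θ := by rw [hz]; simpa using Complex.exp_ofReal_mul_I_im θ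
    have hc1 : Real.cos θ ≠ 1 := by
      intro h
      apply hz1
      have hs : Real.sin θ = 0 := by nlinarith [Real.sin_sq_add_cos_sq θ]
      apply Complex.ext <;> simp [hcos, hsin, h, hs]
    have hns : Complex.normSq (z - 1) = 2 - 2 * Real.cos θ := by
      rw [Complex.normSq_apply]
      simp only [Complex.sub_re, Complex.sub_im, Complex.one_re, Complex.one_im, hcos, hsin]
      nlinarith [Real.sin_sq_add_cos_sq θ]
    have hden : 2 - 2 * Real.cos θ ≠ 0 := by intro h; apply hc1; linarith
    rw [Complex.div_re, hns]
    have hre : (-1 - 1 : ℂ).re = -2 := by norm_num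
    have him : (-1 - 1 : ℂ).im = 0 := by norm_num
    rw [hre, him]
    simp only [Complex.sub_re, Complex.sub_im, Complex.one_re, Complex.one_im, hcos, hsin]
    field_simp
    ring

end ortho

section ortho2

lemma two_sin_sin (a b : ℝ) :
    2 * Real.sin a * Real.sin b = Real.cos (a - b) - Real.cos (a + b) := by
  rw [Real.cos_sub_cos]
  have e1 : ((a-b) + (a+b))/2 = a := by ring
  have e2 : ((a-b) - (a+b))/2 = -b := by ring
  rw [e1, e2, Real.sin_neg]
  ring

lemma phi_ortho (n : ℕ) (hn : 0 < n) {j k : ℕ} (hj1 : 1 ≤ j) (hj2 : j ≤ n-1)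
    (hk1 : 1 ≤ k) (hk2 : k ≤ n-1) :
    (1/(n:ℝ)) * ∑ i ∈ Finset.range n, phi j ((i:ℝ)/n) * phi k ((i:ℝ)/n)
      = if j = k then 1 else 0 := by
  have hn' : (0:ℝ) < n := Nat.cast_pos.mpr hn
  have hterm : ∀ i : ℕ, phi j ((i:ℝ)/n) * phi k ((i:ℝ)/n)
      = Real.cos ((((j:ℤ)-k : ℤ):ℝ) * Real.pi * i / n)
        - Real.cos ((((j:ℤ)+k : ℤ):ℝ) * Real.pi * i / n) := by
    intro i
    have h2 : Real.sqrt 2 * Real.sqrt 2 = 2 := Real.mul_self_sqrt (by norm_num)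
    have e : phi j ((i:ℝ)/n) * phi k ((i:ℝ)/n)
        = 2 * Real.sin ((j:ℝ) * Real.pi * ((i:ℝ)/n)) * Real.sin ((k:ℝ) * Real.pi * ((i:ℝ)/n)) := by
      rw [phi, phi]
      linear_combination (Real.sin ((j:ℝ) * Real.pi * ((i:ℝ)/n)) * Real.sin ((k:ℝ) * Real.pi * ((i:ℝ)/n))) * h2
    rw [e, two_sin_sin]
    have e1 : (j:ℝ) * Real.pi * ((i:ℝ)/n) - (k:ℝ) * Real.pi * ((i:ℝ)/n)
        = (((j:ℤ)-k : ℤ):ℝ) * Real.pi * i / n := by push_cast; ring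
    have e2 : (j:ℝ) * Real.pi * ((i:ℝ)/n) + (k:ℝ) * Real.pi * ((i:ℝ)/n)
        = (((j:ℤ)+k : ℤ):ℝ) * Real.pi * i / n := by push_cast; ring
    rw [e1, e2]
  rw [Finset.sum_congr rfl (fun i _ => hterm i), Finset.sum_sub_distrib]
  rcases eq_or_ne j k with hjk | hjk
  · subst hjk
    have h1 : ∑ i ∈ Finset.range n, Real.cos ((((j:ℤ)-j : ℤ):ℝ) * Real.pi * i / n) = n := by
      have hc : ∀ i ∈ Finset.range n, Real.cos ((((j:ℤ)-j : ℤ):ℝ) * Real.pi * i / n) = 1 := by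
        intro i _; simp
      rw [Finset.sum_congr rfl hc]; simp
    have h2 : ∑ i ∈ Finset.range n, Real.cos ((((j:ℤ)+j : ℤ):ℝ) * Real.pi * i / n) = 0 := by
      rw [cos_sum_eq n hn ((j:ℤ)+j) (by positivity) (by simp [Int.natAbs_add_of_nonneg]; omega)]
      have hno : ¬ Odd ((j:ℤ)+j) := by
        simp [← Int.not_even_iff_odd]
      simp [hno]
    rw [h1, h2, if_pos rfl]
    field_simp; ring
  · have hm1 : ((j:ℤ)-k) ≠ 0 := fun h => hjk (by omega)
    have hm1a : ((j:ℤ)-k).natAbs < 2*n := by omega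
    have hm2 : ((j:ℤ)+k) ≠ 0 := by positivity
    have hm2a : ((j:ℤ)+k).natAbs < 2*n := by omega
    rw [cos_sum_eq n hn _ hm1 hm1a, cos_sum_eq n hn _ hm2 hm2a]
    have hpar : Odd ((j:ℤ)-k) ↔ Odd ((j:ℤ)+k) := by
      simp only [← Int.not_even_iff_odd, Int.even_sub, Int.even_add]
    rw [if_neg hjk]
    by_cases h : Odd ((j:ℤ)-k)
    · rw [if_pos h, if_pos (hpar.mp h)]; ring
    · rw [if_neg h, if_neg (fun hh => h (hpar.mpr hh))]; ring

end ortho2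

section stepint

lemma kappan_on_cell {n : ℕ} (hn : 0 < n) (i : ℕ) {z : ℝ}
    (hz : z ∈ Set.Ioo ((i:ℝ)/n) ((i+1:ℝ)/n)) : kappan n z = (i:ℝ)/n := by
  have hn' : (0:ℝ) < n := Nat.cast_pos.mpr hn
  have hfl : ⌊z * n⌋ = (i:ℤ) := by
    rw [Int.floor_eq_iff]
    constructor
    · have h := hz.1; rw [div_lt_iff₀ hn'] at h; push_cast; linarith
    · have h := hz.2; rw [lt_div_iff₀ hn'] at h; push_cast; linarith
  rw [kappan, hfl]
  simp

lemma cell_integral {n : ℕ} (hn : 0 < n) (f : ℝ → ℝ) (i : ℕ) :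
    IntervalIntegrable (fun z => f (kappan n z)) MeasureTheory.volume ((i:ℝ)/n) ((i+1:ℝ)/n)
    ∧ ∫ z in ((i:ℝ)/n)..((i+1:ℝ)/n), f (kappan n z) = f ((i:ℝ)/n) / n := by
  have hn' : (0:ℝ) < n := Nat.cast_pos.mpr hn
  have hle : (i:ℝ)/n ≤ (i+1:ℝ)/n := by gcongr; linarith
  have hEq : Set.EqOn (fun z => f (kappan n z)) (fun _ => f ((i:ℝ)/n))
      (Set.Ioo ((i:ℝ)/n) ((i+1:ℝ)/n)) := fun z hz => by
    simp only [kappan_on_cell hn i hz]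
  have hconst : MeasureTheory.IntegrableOn (fun _ : ℝ => f ((i:ℝ)/n))
      (Set.Ioo ((i:ℝ)/n) ((i+1:ℝ)/n)) MeasureTheory.volume := by
    exact MeasureTheory.integrableOn_const (by rw [Real.volume_Ioo]; exact ENNReal.ofReal_ne_top)
  have hIoo : MeasureTheory.IntegrableOn (fun z => f (kappan n z))
      (Set.Ioo ((i:ℝ)/n) ((i+1:ℝ)/n)) MeasureTheory.volume :=
    hconst.congr_fun (fun z hz => (hEq hz).symm) measurableSet_Ioo
  have hIoc : MeasureTheory.IntegrableOn (fun z => f (kappan n z))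
      (Set.Ioc ((i:ℝ)/n) ((i+1:ℝ)/n)) MeasureTheory.volume :=
    hIoo.congr_set_ae Ioo_ae_eq_Ioc.symm
  have hii : IntervalIntegrable (fun z => f (kappan n z)) MeasureTheory.volume
      ((i:ℝ)/n) ((i+1:ℝ)/n) := by
    rw [intervalIntegrable_iff, Set.uIoc_of_le hle]
    exact hIoc
  refine ⟨hii, ?_⟩
  rw [intervalIntegral.integral_of_le hle, MeasureTheory.integral_Ioc_eq_integral_Ioo,
    MeasureTheory.setIntegral_congr_fun measurableSet_Ioo hEq,
    MeasureTheory.setIntegral_const, measureReal_def, Real.volume_Ioo]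
  rw [smul_eq_mul, ENNReal.toReal_ofReal (by linarith [hle])]
  field_simp
  ring

lemma integral_comp_kappan {n : ℕ} (hn : 0 < n) (f : ℝ → ℝ) :
    ∫ z in (0:ℝ)..1, f (kappan n z) = (1/(n:ℝ)) * ∑ i ∈ Finset.range n, f ((i:ℝ)/n) := by
  have hn' : (0:ℝ) < n := Nat.cast_pos.mpr hn
  have key := intervalIntegral.sum_integral_adjacent_intervals
    (a := fun i : ℕ => (i:ℝ)/n) (μ := MeasureTheory.volume)
    (f := fun z => f (kappan n z)) (n := n) ?_
  · have h0 : ((0:ℕ):ℝ)/n = 0 := by simp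
    have h1 : ((n:ℕ):ℝ)/n = 1 := by field_simp
    rw [h0, h1] at key
    rw [← key]
    rw [Finset.mul_sum]
    apply Finset.sum_congr rfl
    intro i _
    have := (cell_integral hn f i).2
    push_cast at this ⊢
    rw [this]
    ring
  · intro i _
    have := (cell_integral hn f i).1
    push_cast at this ⊢
    exact this

end stepint

section bounds

lemma sqrt_cn_ge {n j : ℕ} (hj1 : 1 ≤ j) (hj2 : j ≤ n - 1) (hn : 0 < n) :
    2 / Real.pi ≤ Real.sqrt (cn n j) := by
  have hπ := Real.pi_pos
  have hn' : (0:ℝ) < n := Nat.cast_pos.mpr hn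
  have hj' : (0:ℝ) < j := by exact_mod_cast hj1
  set u : ℝ := (j:ℝ) * Real.pi / (2 * n) with hu
  have hu0 : 0 < u := by positivity
  have hu2 : u ≤ Real.pi / 2 := by
    rw [hu, div_le_div_iff₀ (by positivity) (by norm_num)]
    have hjn : (j:ℝ) ≤ n := by
      have : j ≤ n := by omega
      exact_mod_cast this
    nlinarith
  have hsin : 2 / Real.pi * u ≤ Real.sin u := Real.mul_le_sin hu0.le hu2
  have hc : cn n j = (Real.sin u / u)^2 := by
    rw [cn, ← hu]; exact (div_pow _ _ 2).symm
  have hq : (2 / Real.pi)^2 ≤ cn n j := by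
    rw [hc]
    have h1 : 2 / Real.pi ≤ Real.sin u / u := by
      rw [le_div_iff₀ hu0]; linarith
    have h2 : (0:ℝ) ≤ 2 / Real.pi := by positivity
    nlinarith
  calc 2 / Real.pi = Real.sqrt ((2/Real.pi)^2) := by
        rw [Real.sqrt_sq (by positivity)]
    _ ≤ Real.sqrt (cn n j) := Real.sqrt_le_sqrt hq

lemma coeff_bound {n j : ℕ} (hj1 : 1 ≤ j) (hj2 : j ≤ n - 1) (hn : 0 < n) (u : ℝ) :
    |Real.sin u / ((j:ℝ) * Real.pi * Real.sqrt (cn n j))| ≤ 1 / (2 * j) := by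
  have hπ := Real.pi_pos
  have hj' : (0:ℝ) < j := by exact_mod_cast hj1
  have hs := sqrt_cn_ge hj1 hj2 hn
  have hden : (2:ℝ) * j ≤ (j:ℝ) * Real.pi * Real.sqrt (cn n j) := by
    calc (2:ℝ) * j = (j:ℝ) * Real.pi * (2 / Real.pi) := by field_simp
      _ ≤ (j:ℝ) * Real.pi * Real.sqrt (cn n j) := by gcongr
  have hden0 : (0:ℝ) < (j:ℝ) * Real.pi * Real.sqrt (cn n j) := by
    calc (0:ℝ) < 2 * j := by positivity
      _ ≤ _ := hden
  rw [abs_div, abs_of_pos hden0]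
  calc |Real.sin u| / ((j:ℝ) * Real.pi * Real.sqrt (cn n j))
      ≤ 1 / (2 * j) := by
        apply div_le_div₀ (by positivity) (Real.abs_sin_le_one u) (by positivity) hden

lemma phi_grid_bound (j : ℕ) (n : ℕ) (k : ℤ) : |phi j ((k:ℝ)/n)| ≤ Real.sqrt 2 := by
  rw [phi, abs_mul, abs_of_nonneg (Real.sqrt_nonneg 2)]
  calc Real.sqrt 2 * |Real.sin _| ≤ Real.sqrt 2 * 1 := by
        gcongr
        exact Real.abs_sin_le_one _
    _ = Real.sqrt 2 := mul_one _

lemma sin_lip (a b : ℝ) : |Real.sin a - Real.sin b| ≤ |a - b| := by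
  rw [Real.sin_sub_sin, abs_mul, abs_mul]
  have h1 : |Real.sin ((a-b)/2)| ≤ |(a-b)/2| := Real.abs_sin_le_abs
  have h2 : |Real.cos ((a+b)/2)| ≤ 1 := Real.abs_cos_le_one _
  calc |(2:ℝ)| * |Real.sin ((a-b)/2)| * |Real.cos ((a+b)/2)|
      ≤ |(2:ℝ)| * |(a-b)/2| * 1 := by gcongr
    _ = |a - b| := by rw [abs_of_nonneg (by norm_num : (0:ℝ) ≤ 2), abs_div]; rw [abs_of_nonneg (by norm_num : (0:ℝ) ≤ 2)]; ring

lemma phi_grid_lip (j : ℕ) {n : ℕ} (hn : 0 < n) (k : ℤ) :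
    |phi j ((k+1:ℝ)/n) - phi j ((k:ℝ)/n)| ≤ (Real.sqrt 2 * j * Real.pi) / n := by
  have hn' : (0:ℝ) < n := Nat.cast_pos.mpr hn
  rw [phi, phi, ← mul_sub, abs_mul, abs_of_nonneg (Real.sqrt_nonneg 2)]
  have hsin : |Real.sin ((j:ℝ) * Real.pi * ((k+1:ℝ)/n)) - Real.sin ((j:ℝ) * Real.pi * ((k:ℝ)/n))|
      ≤ |(j:ℝ) * Real.pi * ((k+1:ℝ)/n) - (j:ℝ) * Real.pi * ((k:ℝ)/n)| := by
    exact sin_lip _ _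
  have he : |(j:ℝ) * Real.pi * ((k+1:ℝ)/n) - (j:ℝ) * Real.pi * ((k:ℝ)/n)|
      = (j:ℝ) * Real.pi / n := by
    rw [show (j:ℝ) * Real.pi * ((k+1:ℝ)/n) - (j:ℝ) * Real.pi * ((k:ℝ)/n)
        = (j:ℝ) * Real.pi / n from by field_simp; ring]
    exact abs_of_nonneg (by positivity)
  calc Real.sqrt 2 * |Real.sin ((j:ℝ) * Real.pi * ((k+1:ℝ)/n)) - Real.sin ((j:ℝ) * Real.pi * ((k:ℝ)/n))|
      ≤ Real.sqrt 2 * ((j:ℝ) * Real.pi / n) := by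
        rw [← he]; gcongr
    _ = (Real.sqrt 2 * j * Real.pi) / n := by ring

end bounds

theorem stmt3 (T : ℝ) (hT : 0 < T) :
    ∃ K : ℝ, 0 < K ∧ ∀ n : ℕ, 1 ≤ n →
      ∀ t ∈ Set.Icc (0:ℝ) T, ∀ x ∈ Set.Icc (0:ℝ) 1, ∀ y ∈ Set.Icc (0:ℝ) 1,
        (∫ z in (0:ℝ)..1, |greenGn n t x z - greenGn n t y z|^2) ≤ K * |x - y| := by
  refine ⟨14, by norm_num, ?_⟩
  intro n hn t ht x hx y hy
  have hn0 : 0 < n := hn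
  have hn' : (0:ℝ) < n := Nat.cast_pos.mpr hn0
  have hπ := Real.pi_pos
  set s : Finset ℕ := Finset.Icc 1 (n-1) with hs
  set b : ℕ → ℝ := fun j =>
    Real.sin (j * Real.pi * t * Real.sqrt (cn n j)) / ((j:ℝ) * Real.pi * Real.sqrt (cn n j)) *
      (Pin n (phi j) x - Pin n (phi j) y) with hb
  have hdiff : ∀ z : ℝ, greenGn n t x z - greenGn n t y z
      = ∑ j ∈ s, b j * phi j (kappan n z) := by
    intro z
    rw [greenGn, greenGn, ← Finset.sum_sub_distrib]
    exact Finset.sum_congr rfl fun j _ => by rw [hb]; ring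
  -- Step A: reduce to discrete sum
  have hint : (∫ z in (0:ℝ)..1, |greenGn n t x z - greenGn n t y z|^2)
      = (1/(n:ℝ)) * ∑ i ∈ Finset.range n, |∑ j ∈ s, b j * phi j ((i:ℝ)/n)|^2 := by
    have h1 : (∫ z in (0:ℝ)..1, |greenGn n t x z - greenGn n t y z|^2)
        = ∫ z in (0:ℝ)..1, (fun u => |∑ j ∈ s, b j * phi j u|^2) (kappan n z) := by
      apply intervalIntegral.integral_congr
      intro z _
      simp only [hdiff z]
    exact h1.trans (integral_comp_kappan hn0 (fun u => |∑ j ∈ s, b j * phi j u|^2))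
  -- Step B: orthogonality
  have hexp : (1/(n:ℝ)) * ∑ i ∈ Finset.range n, |∑ j ∈ s, b j * phi j ((i:ℝ)/n)|^2
      = ∑ j ∈ s, (b j)^2 := by
    have hsq : ∀ i : ℕ, |∑ j ∈ s, b j * phi j ((i:ℝ)/n)|^2
        = ∑ j ∈ s, ∑ k ∈ s, (b j * b k) * (phi j ((i:ℝ)/n) * phi k ((i:ℝ)/n)) := by
      intro i
      rw [sq_abs, sq, Finset.sum_mul_sum]
      exact Finset.sum_congr rfl fun j _ => Finset.sum_congr rfl fun k _ => by ring
    simp only [hsq]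
    rw [Finset.mul_sum]
    simp only [Finset.mul_sum]
    rw [Finset.sum_comm]
    have hswap : ∀ j ∈ s, ∑ i ∈ Finset.range n, ∑ k ∈ s,
        (1/(n:ℝ)) * ((b j * b k) * (phi j ((i:ℝ)/n) * phi k ((i:ℝ)/n)))
        = ∑ k ∈ s, ∑ i ∈ Finset.range n,
        (1/(n:ℝ)) * ((b j * b k) * (phi j ((i:ℝ)/n) * phi k ((i:ℝ)/n))) := by
      intro j _
      exact Finset.sum_comm
    rw [Finset.sum_congr rfl hswap]
    apply Finset.sum_congr rfl
    intro j hj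
    have hjmem := Finset.mem_Icc.mp (hs ▸ hj)
    have hinner : ∀ k ∈ s, ∑ i ∈ Finset.range n,
        (1/(n:ℝ)) * ((b j * b k) * (phi j ((i:ℝ)/n) * phi k ((i:ℝ)/n)))
        = if k = j then (b j)^2 else 0 := by
      intro k hk
      have hkmem := Finset.mem_Icc.mp (hs ▸ hk)
      have : ∑ i ∈ Finset.range n,
          (1/(n:ℝ)) * ((b j * b k) * (phi j ((i:ℝ)/n) * phi k ((i:ℝ)/n)))
          = (b j * b k) * ((1/(n:ℝ)) * ∑ i ∈ Finset.range n, phi j ((i:ℝ)/n) * phi k ((i:ℝ)/n)) := by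
        rw [Finset.mul_sum, Finset.mul_sum]
        exact Finset.sum_congr rfl fun i _ => by ring
      rw [this, phi_ortho n hn0 hjmem.1 hjmem.2 hkmem.1 hkmem.2]
      by_cases hkj : k = j
      · subst hkj; simp [sq]
      · rw [if_neg (fun h => hkj h.symm), if_neg hkj, mul_zero]
    rw [Finset.sum_congr rfl hinner, Finset.sum_ite_eq' s j (fun _ => (b j)^2), if_pos hj]
  rw [hint, hexp]
  -- Step C: bound the sum
  set d := |x - y| with hd
  have hd0 : 0 ≤ d := abs_nonneg _
  have hd1 : d ≤ 1 := by
    rw [hd, abs_sub_le_iff]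
    obtain ⟨hx0, hx1⟩ := hx; obtain ⟨hy0, hy1⟩ := hy
    constructor <;> linarith
  rcases eq_or_lt_of_le hd0 with hdz | hdpos
  · -- d = 0 : x = y, all b j = 0
    have hxy : x = y := by rw [hd] at hdz; have := abs_eq_zero.mp hdz.symm; linarith
    have : ∀ j ∈ s, (b j)^2 = 0 := by
      intro j _; rw [hb]; subst hxy; simp
    rw [Finset.sum_congr rfl this, Finset.sum_const, smul_zero, ← hdz]
    norm_num
  · -- d > 0
    set J : ℕ := ⌈1/d⌉₊ with hJ
    have hJ1 : 1 ≤ J := Nat.one_le_ceil_iff.mpr (by positivity)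
    have hJlb : 1/d ≤ (J:ℝ) := Nat.le_ceil _
    have hJub : (J:ℝ) ≤ 2/d := by
      have h1 : (J:ℝ) < 1/d + 1 := Nat.ceil_lt_add_one (by positivity)
      have h2 : (1:ℝ) ≤ 1/d := by rw [le_div_iff₀ hdpos]; linarith
      have h3 : (2:ℝ)/d = 1/d + 1/d := by ring
      linarith
    -- pointwise bounds
    have hb1 : ∀ j ∈ s, (b j)^2 ≤ Real.pi^2 * d^2 / 2 := by
      intro j hj
      have hjm := Finset.mem_Icc.mp (hs ▸ hj)
      have hj' : (0:ℝ) < j := by exact_mod_cast hjm.1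
      have hA := coeff_bound hjm.1 hjm.2 hn0 ((j:ℝ) * Real.pi * t * Real.sqrt (cn n j))
      have hLip : |Pin n (phi j) x - Pin n (phi j) y| ≤ (Real.sqrt 2 * j * Real.pi) * d := by
        apply pin_lip hn0 (by positivity) (fun k => phi_grid_lip j hn0 k)
      have habs : |b j| ≤ (1 / (2*(j:ℝ))) * ((Real.sqrt 2 * j * Real.pi) * d) := by
        rw [hb, abs_mul]
        exact mul_le_mul hA hLip (abs_nonneg _) (by positivity)
      have hsqrt2 : Real.sqrt 2 ^ 2 = 2 := Real.sq_sqrt (by norm_num)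
      calc (b j)^2 = |b j|^2 := (sq_abs _).symm
        _ ≤ ((1 / (2*(j:ℝ))) * ((Real.sqrt 2 * j * Real.pi) * d))^2 := by
            apply pow_le_pow_left₀ (abs_nonneg _) habs
        _ = Real.sqrt 2^2 * (Real.pi^2*d^2) / 4 * ((j:ℝ)^2/(j:ℝ)^2) := by ring
        _ = Real.pi^2 * d^2 / 2 := by
            rw [div_self (pow_ne_zero 2 (ne_of_gt hj')), mul_one, hsqrt2]
            ring
    have hb2 : ∀ j ∈ s, (b j)^2 ≤ 2 / (j:ℝ)^2 := by
      intro j hj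
      have hjm := Finset.mem_Icc.mp (hs ▸ hj)
      have hj' : (0:ℝ) < j := by exact_mod_cast hjm.1
      have hA := coeff_bound hjm.1 hjm.2 hn0 ((j:ℝ) * Real.pi * t * Real.sqrt (cn n j))
      have hBdd : |Pin n (phi j) x - Pin n (phi j) y| ≤ 2 * Real.sqrt 2 := by
        calc |Pin n (phi j) x - Pin n (phi j) y|
            ≤ |Pin n (phi j) x| + |Pin n (phi j) y| := abs_sub _ _
          _ ≤ Real.sqrt 2 + Real.sqrt 2 := add_le_add
              (pin_bound hn0 (phi_grid_bound j n) x) (pin_bound hn0 (phi_grid_bound j n) y)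
          _ = 2 * Real.sqrt 2 := by ring
      have habs : |b j| ≤ (1 / (2*(j:ℝ))) * (2 * Real.sqrt 2) := by
        rw [hb, abs_mul]
        exact mul_le_mul hA hBdd (abs_nonneg _) (by positivity)
      have hsqrt2 : Real.sqrt 2 ^ 2 = 2 := Real.sq_sqrt (by norm_num)
      calc (b j)^2 = |b j|^2 := (sq_abs _).symm
        _ ≤ ((1 / (2*(j:ℝ))) * (2 * Real.sqrt 2))^2 := by
            apply pow_le_pow_left₀ (abs_nonneg _) habs
        _ = Real.sqrt 2^2 / (j:ℝ)^2 := by ring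
        _ = 2 / (j:ℝ)^2 := by rw [hsqrt2]
    -- split the sum at J
    have hsplit := (Finset.sum_filter_add_sum_filter_not s (fun j => j ≤ J) (fun j => (b j)^2)).symm
    rw [hsplit]
    have hlow : ∑ j ∈ s.filter (fun j => j ≤ J), (b j)^2 ≤ (J:ℝ) * (Real.pi^2 * d^2 / 2) := by
      calc ∑ j ∈ s.filter (fun j => j ≤ J), (b j)^2
          ≤ ∑ _j ∈ s.filter (fun j => j ≤ J), (Real.pi^2 * d^2 / 2) :=
            Finset.sum_le_sum (fun j hj => hb1 j (Finset.filter_subset _ _ hj))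
        _ = (s.filter (fun j => j ≤ J)).card * (Real.pi^2 * d^2 / 2) := by
            rw [Finset.sum_const, nsmul_eq_mul]
        _ ≤ (J:ℝ) * (Real.pi^2 * d^2 / 2) := by
            have hcard : (s.filter (fun j => j ≤ J)).card ≤ J := by
              have hsub : s.filter (fun j => j ≤ J) ⊆ Finset.Icc 1 J := by
                intro j hj
                have h1 := Finset.mem_filter.mp hj
                have h2 := Finset.mem_Icc.mp (hs ▸ h1.1)
                exact Finset.mem_Icc.mpr ⟨h2.1, h1.2⟩
              calc (s.filter (fun j => j ≤ J)).card ≤ (Finset.Icc 1 J).card :=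
                    Finset.card_le_card hsub
                _ = J := by rw [Nat.card_Icc]; omega
            have : ((s.filter (fun j => j ≤ J)).card : ℝ) ≤ (J:ℝ) := by exact_mod_cast hcard
            have hpos : (0:ℝ) ≤ Real.pi^2 * d^2 / 2 := by positivity
            nlinarith
    have hhigh : ∑ j ∈ s.filter (fun j => ¬ j ≤ J), (b j)^2 ≤ 2 * d := by
      have h1 : ∑ j ∈ s.filter (fun j => ¬ j ≤ J), (b j)^2
          ≤ ∑ j ∈ Finset.Ioc J (n-1), 2 * ((j:ℝ)^2)⁻¹ := by
        apply Finset.sum_le_sum_of_subset_of_nonneg ?_ (fun j _ _ => by positivity) |>.trans'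
        · apply Finset.sum_le_sum
          intro j hj
          have := hb2 j (Finset.filter_subset _ _ hj)
          rw [div_eq_mul_inv] at this
          exact this
        · intro j hj
          have h1 := Finset.mem_filter.mp hj
          have h2 := Finset.mem_Icc.mp (hs ▸ h1.1)
          exact Finset.mem_Ioc.mpr ⟨by omega, h2.2⟩
      have h2 : ∑ j ∈ Finset.Ioc J (n-1), 2 * ((j:ℝ)^2)⁻¹ ≤ 2 * d := by
        rw [← Finset.mul_sum]
        by_cases hJn : J ≤ n - 1
        · have hle := sum_Ioc_inv_sq_le_sub (α := ℝ) (k := J) (n := n-1) (by omega) hJn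
          have hJpos : (0:ℝ) < (J:ℝ) := by exact_mod_cast hJ1
          have hJinv : (J:ℝ)⁻¹ ≤ d := by
            have h1' : (1:ℝ) ≤ (J:ℝ) * d :=
              calc (1:ℝ) = (1/d) * d := by field_simp
                _ ≤ (J:ℝ) * d := by gcongr
            have h2' : (J:ℝ)⁻¹ * ((J:ℝ)*d) = d := by field_simp
            have h3' := mul_le_mul_of_nonneg_left h1' (inv_pos.mpr hJpos).le
            rw [mul_one, h2'] at h3'
            exact h3'
          have hnn : (0:ℝ) ≤ ((n-1:ℕ):ℝ)⁻¹ := by positivity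
          nlinarith
        · rw [Finset.Ioc_eq_empty (by omega), Finset.sum_empty]
          nlinarith
      exact h1.trans h2
    calc ∑ j ∈ s.filter (fun j => j ≤ J), (b j)^2 + ∑ j ∈ s.filter (fun j => ¬ j ≤ J), (b j)^2
        ≤ (J:ℝ) * (Real.pi^2 * d^2 / 2) + 2 * d := add_le_add hlow hhigh
      _ ≤ 14 * d := by
          have hJd : (J:ℝ) * (Real.pi^2 * d^2 / 2) ≤ Real.pi^2 * d := by
            have := mul_le_mul_of_nonneg_right hJub
              (show (0:ℝ) ≤ Real.pi^2 * d^2 / 2 by positivity)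
            have he : (2/d) * (Real.pi^2 * d^2 / 2) = Real.pi^2 * d := by
              field_simp
            rw [he] at this
            linarith
          have hpi2 : Real.pi^2 ≤ 12 := by nlinarith [Real.pi_lt_d2, Real.pi_gt_three]
          have hfin : Real.pi^2 * d ≤ 12 * d := mul_le_mul_of_nonneg_right hpi2 hd0
          linarith
end

section
/- For every n∈ℕ⁺, every t∈[0,T], every x∈[0,1] and every y∈[0,1], the discrete Green function satisfies the discrete wave equation in the second variable: ∂²/∂t² G^n_t(x,y) = Δ_{n,y} G^n_t(x,y), where Δ_{n,y} denotes the discrete Dirichlet Laplacian applied in the variable y. -/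
open MeasureTheory Real Filter
open scoped ENNReal

-- ===== auxiliary lemmas =====

lemma greenGn_eq (n : ℕ) (x y s : ℝ) :
    greenGn n s x y = ∑ j ∈ Finset.Icc 1 (n-1),
      Real.sin ((j * Real.pi * Real.sqrt (cn n j)) * s) *
        (Pin n (phi j) x * phi j (kappan n y) / (j * Real.pi * Real.sqrt (cn n j))) := by
  unfold greenGn
  refine Finset.sum_congr rfl fun j _ => ?_
  have h : (j:ℝ) * Real.pi * s * Real.sqrt (cn n j)
      = (j:ℝ) * Real.pi * Real.sqrt (cn n j) * s := by ring
  rw [h]; ring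

lemma iter2_sum (F : Finset ℕ) (ω C : ℕ → ℝ) (t : ℝ) :
    iteratedDeriv 2 (fun s => ∑ j ∈ F, Real.sin (ω j * s) * C j) t
      = ∑ j ∈ F, -((ω j)^2) * Real.sin (ω j * t) * C j := by
  have h1 : ∀ s : ℝ, HasDerivAt (fun s => ∑ j ∈ F, Real.sin (ω j * s) * C j)
      (∑ j ∈ F, ω j * Real.cos (ω j * s) * C j) s := by
    intro s
    refine HasDerivAt.fun_sum fun j _ => ?_
    have h : HasDerivAt (fun s => Real.sin (ω j * s) * C j) _ s := ((Real.hasDerivAt_sin (ω j * s)).comp s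
      ((hasDerivAt_id s).const_mul (ω j))).mul_const (C j)
    exact h.congr_deriv (by ring)
  have h2 : ∀ s : ℝ, HasDerivAt (fun s => ∑ j ∈ F, ω j * Real.cos (ω j * s) * C j)
      (∑ j ∈ F, -((ω j)^2) * Real.sin (ω j * s) * C j) s := by
    intro s
    refine HasDerivAt.fun_sum fun j _ => ?_
    have h : HasDerivAt (fun s => ω j * Real.cos (ω j * s) * C j) _ s := (((Real.hasDerivAt_cos (ω j * s)).comp s
      ((hasDerivAt_id s).const_mul (ω j))).const_mul (ω j)).mul_const (C j)
    exact h.congr_deriv (by ring)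
  rw [iteratedDeriv_succ, iteratedDeriv_one]
  have hd : deriv (fun s => ∑ j ∈ F, Real.sin (ω j * s) * C j)
      = fun s => ∑ j ∈ F, ω j * Real.cos (ω j * s) * C j :=
    funext fun s => (h1 s).deriv
  rw [hd, (h2 t).deriv]

lemma kappan_intCast (n : ℕ) (hn : (n:ℝ) ≠ 0) (k : ℤ) :
    kappan n ((k:ℝ)/n) = (k:ℝ)/n := by
  unfold kappan
  rw [div_mul_cancel₀ _ hn, Int.floor_intCast]

lemma lap_eigen (n j : ℕ) (hn : 1 ≤ n) (hj : 1 ≤ j) (k : ℤ) :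
    (n:ℝ)^2 * (phi j (((k:ℝ)+1)/n) - 2 * phi j ((k:ℝ)/n) + phi j (((k:ℝ)-1)/n))
      = -(((j:ℝ) * Real.pi * Real.sqrt (cn n j))^2) * phi j ((k:ℝ)/n) := by
  have hnR : (0:ℝ) < n := by exact_mod_cast Nat.lt_of_lt_of_le Nat.zero_lt_one hn
  have hjR : (0:ℝ) < j := by exact_mod_cast Nat.lt_of_lt_of_le Nat.zero_lt_one hj
  have hπ : Real.pi ≠ 0 := Real.pi_ne_zero
  have hcnn : 0 ≤ cn n j := by unfold cn; positivity
  have hω2 : ((j:ℝ) * Real.pi * Real.sqrt (cn n j))^2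
      = 4 * (n:ℝ)^2 * Real.sin ((j:ℝ) * Real.pi / (2*n))^2 := by
    have h1 : ((j:ℝ) * Real.pi * Real.sqrt (cn n j))^2
        = ((j:ℝ) * Real.pi)^2 * (cn n j) := by
      rw [mul_pow, Real.sq_sqrt hcnn]
    rw [h1]
    unfold cn
    field_simp
    ring
  have ha : (j:ℝ) * Real.pi * (((k:ℝ)+1)/n)
      = (j:ℝ) * Real.pi * ((k:ℝ)/n) + (j:ℝ) * Real.pi / n := by field_simp
  have hb : (j:ℝ) * Real.pi * (((k:ℝ)-1)/n)
      = (j:ℝ) * Real.pi * ((k:ℝ)/n) - (j:ℝ) * Real.pi / n := by field_simp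
  have hcos : Real.cos ((j:ℝ) * Real.pi / n)
      = 1 - 2 * Real.sin ((j:ℝ) * Real.pi / (2*n))^2 := by
    have h2 : (j:ℝ) * Real.pi / n = 2 * ((j:ℝ) * Real.pi / (2*n)) := by field_simp
    rw [h2, Real.cos_two_mul']
    nlinarith [Real.sin_sq_add_cos_sq ((j:ℝ) * Real.pi / (2*n))]
  unfold phi
  rw [ha, hb, Real.sin_add, Real.sin_sub, hω2, hcos]
  ring

theorem stmt6 (T : ℝ) (hT : 0 < T) (n : ℕ) (hn : 1 ≤ n)
    (t : ℝ) (ht : t ∈ Set.Icc (0:ℝ) T) (x : ℝ) (hx : x ∈ Set.Icc (0:ℝ) 1)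
    (y : ℝ) (hy : y ∈ Set.Icc (0:ℝ) 1) :
    iteratedDeriv 2 (fun s => greenGn n s x y) t = discLap n (fun z => greenGn n t x z) y := by
  obtain ⟨hy0, hy1⟩ := hy
  have hnR : (0:ℝ) < n := by exact_mod_cast Nat.lt_of_lt_of_le Nat.zero_lt_one hn
  have hnne : (n:ℝ) ≠ 0 := ne_of_gt hnR
  have hLHS : iteratedDeriv 2 (fun s => greenGn n s x y) t
      = ∑ j ∈ Finset.Icc 1 (n-1),
          -(((j:ℝ) * Real.pi * Real.sqrt (cn n j))^2) *
            Real.sin (((j:ℝ) * Real.pi * Real.sqrt (cn n j)) * t) *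
            (Pin n (phi j) x * phi j (kappan n y) / ((j:ℝ) * Real.pi * Real.sqrt (cn n j))) := by
    have hfun : (fun s => greenGn n s x y) = (fun s => ∑ j ∈ Finset.Icc 1 (n-1),
        Real.sin (((j:ℝ) * Real.pi * Real.sqrt (cn n j)) * s) *
          (Pin n (phi j) x * phi j (kappan n y) / ((j:ℝ) * Real.pi * Real.sqrt (cn n j)))) :=
      funext fun s => greenGn_eq n x y s
    rw [hfun]
    exact iter2_sum _ _ _ t
  rw [hLHS]
  unfold discLap
  by_cases hmem : y ∈ Set.Ico ((1:ℝ)/n) 1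
  · rw [if_pos hmem]
    obtain ⟨hm1, hm2⟩ := hmem
    have h1 : (1:ℝ) ≤ y * n := (div_le_iff₀ hnR).mp hm1
    have h2 : y * n < n := by nlinarith
    set k : ℤ := ⌊y * (n:ℝ)⌋ with hk
    have hk1 : (1:ℤ) ≤ k := by
      refine Int.le_floor.mpr ?_
      exact_mod_cast h1
    have hκ : kappan n y = (k:ℝ)/n := by unfold kappan; rw [← hk]
    have hκp : kappan n y + 1/n = (((k+1:ℤ)):ℝ)/n := by rw [hκ]; push_cast; ring
    have hκm : kappan n y - 1/n = (((k-1:ℤ)):ℝ)/n := by rw [hκ]; push_cast; ring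
    rw [hκp, hκm, hκ]
    simp only []
    rw [greenGn_eq, greenGn_eq, greenGn_eq,
      kappan_intCast n hnne (k+1), kappan_intCast n hnne (k-1), kappan_intCast n hnne k]
    have expand : ∀ (a b c : ℕ → ℝ),
        (n:ℝ)^2 * ((∑ j ∈ Finset.Icc 1 (n-1), a j) - 2 * (∑ j ∈ Finset.Icc 1 (n-1), b j)
          + (∑ j ∈ Finset.Icc 1 (n-1), c j))
        = ∑ j ∈ Finset.Icc 1 (n-1), (n:ℝ)^2 * (a j - 2 * b j + c j) := by
      intro a b c
      simp only [Finset.sum_add_distrib, Finset.sum_sub_distrib, ← Finset.mul_sum]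
      try ring
    rw [expand]
    refine Finset.sum_congr rfl fun j hj => ?_
    have hj1 : 1 ≤ j := (Finset.mem_Icc.mp hj).1
    have hkey := lap_eigen n j hn hj1 k
    have hc1 : ((k+1:ℤ):ℝ) = (k:ℝ)+1 := by push_cast; ring
    have hc2 : ((k-1:ℤ):ℝ) = (k:ℝ)-1 := by push_cast; ring
    rw [hc1, hc2]
    linear_combination
      (-(Real.sin ((j:ℝ) * Real.pi * Real.sqrt (cn n j) * t)
        / ((j:ℝ) * Real.pi * Real.sqrt (cn n j)) * Pin n (phi j) x)) * hkey
  · rw [if_neg hmem]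
    refine Finset.sum_eq_zero fun j _ => ?_
    have hφ : phi j (kappan n y) = 0 := by
      rw [Set.mem_Ico, not_and_or, not_le, not_lt] at hmem
      rcases hmem with h | h
      · have hfl : ⌊y * (n:ℝ)⌋ = 0 := by
          refine Int.floor_eq_zero_iff.mpr ?_
          constructor
          · positivity
          · calc y * n < (1/n) * n := by nlinarith
              _ = 1 := by field_simp
        unfold kappan
        rw [hfl]
        simp [phi]
      · have hy1' : y = 1 := le_antisymm hy1 h
        subst hy1'
        have hfl : ⌊(1:ℝ) * (n:ℝ)⌋ = (n:ℤ) := by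
          rw [one_mul]
          exact_mod_cast Int.floor_natCast n
        unfold kappan
        rw [hfl]
        have : ((n:ℤ):ℝ)/(n:ℝ) = 1 := by rw [Int.cast_natCast]; field_simp
        rw [this]
        unfold phi
        rw [mul_one, Real.sin_nat_mul_pi, mul_zero]
    rw [hφ]
    simp
end
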